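/- arXiv:2008.05604 — 10 statements merged into one kernel-verified Lean document; each statement's English description precedes it below -/
import Mathlib

section
/- Let a_n be a sequence of positive reals, t(x,y) = 4(1-x)(1-y) - (1-xy)^2, and u_n = a_{n-1}a_{n+1}/a_n^2. Suppose there exist N and sequences f_n, g_n such that for all n ≥ N, g_n < u_n < f_n and t(g_n,g_{n+1}) > 0, t(g_n,f_{n+1}) > 0, t(f_n,g_{n+1}) > 0, t(f_n,f_{n+1}) > 0. Then for all n ≥ N, a_n satisfies the higher order Turán inequality: 4(a_n^2 - a_{n-1}a_{n+1})(a_{n+1}^2 - a_n a_{n+2}) - (a_n a_{n+1} - a_{n-1} a_{n+2})^2 > 0. -/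
lemma aux_step (y gx fx x : ℝ) (h1 : gx < x) (h2 : x < fx)
    (hg : 0 < 4 * (1 - gx) * (1 - y) - (1 - gx * y) ^ 2)
    (hf : 0 < 4 * (1 - fx) * (1 - y) - (1 - fx * y) ^ 2) :
    0 < 4 * (1 - x) * (1 - y) - (1 - x * y) ^ 2 := by
  nlinarith [mul_pos hg (sub_pos.2 h2), mul_pos hf (sub_pos.2 h1),
    mul_nonneg (mul_nonneg (mul_nonneg (sub_pos.2 h1).le (sub_pos.2 h2).le) (sq_nonneg y)) (sub_pos.2 (h1.trans h2)).le,
    sub_pos.2 (h1.trans h2)]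

lemma aux_step' (x gy fy y : ℝ) (h1 : gy < y) (h2 : y < fy)
    (hg : 0 < 4 * (1 - x) * (1 - gy) - (1 - x * gy) ^ 2)
    (hf : 0 < 4 * (1 - x) * (1 - fy) - (1 - x * fy) ^ 2) :
    0 < 4 * (1 - x) * (1 - y) - (1 - x * y) ^ 2 := by
  have := aux_step x gy fy y h1 h2 (by nlinarith) (by nlinarith)
  nlinarith

theorem stmt3 (a u f g : ℕ → ℝ) (hpos : ∀ n, 0 < a n)
    (hu : ∀ n, 1 ≤ n → u n = a (n - 1) * a (n + 1) / (a n) ^ 2)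
    (t : ℝ → ℝ → ℝ)
    (ht : ∀ x y, t x y = 4 * (1 - x) * (1 - y) - (1 - x * y) ^ 2)
    (N : ℕ) (hN : 1 ≤ N)
    (hbound : ∀ n, N ≤ n → g n < u n ∧ u n < f n)
    (hcorners : ∀ n, N ≤ n → 0 < t (g n) (g (n + 1)) ∧ 0 < t (g n) (f (n + 1)) ∧
      0 < t (f n) (g (n + 1)) ∧ 0 < t (f n) (f (n + 1))) :
    ∀ n, N ≤ n →
      0 < 4 * ((a n) ^ 2 - a (n - 1) * a (n + 1)) * ((a (n + 1)) ^ 2 - a n * a (n + 2))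
          - (a n * a (n + 1) - a (n - 1) * a (n + 2)) ^ 2 := by
  intro n hn
  have hn1 : 1 ≤ n := hN.trans hn
  obtain ⟨hb1, hb2⟩ := hbound n hn
  obtain ⟨hb3, hb4⟩ := hbound (n + 1) (hn.trans (Nat.le_succ n))
  obtain ⟨hc1, hc2, hc3, hc4⟩ := hcorners n hn
  rw [ht] at hc1 hc2 hc3 hc4
  -- interpolate in first variable at y = g(n+1) and y = f(n+1)
  have h5 : 0 < 4 * (1 - u n) * (1 - g (n + 1)) - (1 - u n * g (n + 1)) ^ 2 :=
    aux_step _ _ _ _ hb1 hb2 hc1 hc3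
  have h6 : 0 < 4 * (1 - u n) * (1 - f (n + 1)) - (1 - u n * f (n + 1)) ^ 2 :=
    aux_step _ _ _ _ hb1 hb2 hc2 hc4
  have h7 : 0 < 4 * (1 - u n) * (1 - u (n + 1)) - (1 - u n * u (n + 1)) ^ 2 :=
    aux_step' _ _ _ _ hb3 hb4 h5 h6
  have e1 : u n = a (n - 1) * a (n + 1) / (a n) ^ 2 := hu n hn1
  have e2 : u (n + 1) = a n * a (n + 2) / (a (n + 1)) ^ 2 := by
    have := hu (n + 1) (by omega)
    simpa using this
  rw [e1, e2] at h7
  have px := hpos (n - 1)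
  have py := hpos n
  have pz := hpos (n + 1)
  have pw := hpos (n + 2)
  have key : 4 * ((a n) ^ 2 - a (n - 1) * a (n + 1)) * ((a (n + 1)) ^ 2 - a n * a (n + 2))
      - (a n * a (n + 1) - a (n - 1) * a (n + 2)) ^ 2
      = (a n) ^ 2 * (a (n + 1)) ^ 2 *
        (4 * (1 - a (n - 1) * a (n + 1) / (a n) ^ 2) * (1 - a n * a (n + 2) / (a (n + 1)) ^ 2)
          - (1 - (a (n - 1) * a (n + 1) / (a n) ^ 2) * (a n * a (n + 2) / (a (n + 1)) ^ 2)) ^ 2) := by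
    field_simp
  rw [key]
  positivity
end

section
/- Suppose M_n is a positive sequence satisfying 1 + 1/(2n^2) < M_{n+1}M_{n-1}/M_n^2 < 1 + 5/(2n^2) for all n ≥ 75. Then the sequence a_n = M_n/n! satisfies (n/(n+1))(1 + 1/(2n^2)) < a_{n+1}a_{n-1}/a_n^2 < (n/(n+1))(1 + 5/(2n^2)) for all n ≥ 75, and consequently a_n satisfies the higher order Turán inequality 4(a_n^2 - a_{n-1}a_{n+1})(a_{n+1}^2 - a_n a_{n+2}) - (a_n a_{n+1} - a_{n-1} a_{n+2})^2 > 0 for all n ≥ 75. -/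
lemma core2 (N p q : ℝ) (hN : 75 ≤ N) (b1 : 1 < 2*N*p) (b2 : N*p < 1)
    (b3 : 1 < 2*N*q) (b4 : N*q < 1) (b5 : (p-q)*N^2 < 3) (b6 : (q-p)*N^2 < 3) :
    0 < 2*p*q*(p+q) - (p-q)^2 - (p*q)^2 := by
  have hN0 : (0:ℝ) < N := by linarith
  have hp0 : 0 < p := by nlinarith
  have hq0 : 0 < q := by nlinarith
  have c1 : (p-q)^2 * N^4 < 9 := by nlinarith [sq_nonneg ((p-q)*N^2)]
  have d : N*p*(N*q) < 1 := by nlinarith [mul_pos (mul_pos hN0 hp0) (mul_pos hN0 hq0)]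
  have d0 : 0 < N*p*(N*q) := by positivity
  have c2 : (p*q)^2 * N^4 < 1 := by nlinarith [d, d0]
  have e1 : 1 < 4*(N*p)*(N*q) := by nlinarith
  have e2 : 1 < N*(p+q) := by nlinarith
  have e3 : 1 < 4*(N*p)*(N*q)*(N*(p+q)) := by
    nlinarith [mul_pos (by linarith : (0:ℝ) < 4*(N*p)*(N*q) - 1) (by linarith : (0:ℝ) < N*(p+q) - 1)]
  have c3 : 10 < 2*p*q*(p+q) * N^4 := by
    nlinarith [mul_pos (by linarith : (0:ℝ) < 4*(N*p)*(N*q)*(N*(p+q)) - 1) hN0]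
  nlinarith [pow_pos hN0 4]

lemma core (N p q : ℝ) (hN : 75 ≤ N)
    (hp1 : (2*N-5)/(2*N*(N+1)) < p) (hp2 : p < (2*N-1)/(2*N*(N+1)))
    (hq1 : (2*N-3)/(2*(N+1)*(N+2)) < q) (hq2 : q < (2*N+1)/(2*(N+1)*(N+2))) :
    0 < 2*p*q*(p+q) - (p-q)^2 - (p*q)^2 := by
  have hN0 : (0:ℝ) < N := by linarith
  have h1 : (0:ℝ) < N + 1 := by linarith
  have h2 : (0:ℝ) < N + 2 := by linarith
  have hp3 : 1/(2*N) < p := by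
    refine lt_trans ?_ hp1
    rw [div_lt_div_iff₀ (by positivity) (by positivity)]
    nlinarith
  have hp4 : p < 1/N := by
    refine lt_trans hp2 ?_
    rw [div_lt_div_iff₀ (by positivity) (by positivity)]
    nlinarith
  have hq3 : 1/(2*N) < q := by
    refine lt_trans ?_ hq1
    rw [div_lt_div_iff₀ (by positivity) (by positivity)]
    nlinarith
  have hq4 : q < 1/N := by
    refine lt_trans hq2 ?_
    rw [div_lt_div_iff₀ (by positivity) (by positivity)]
    nlinarith
  have hd1 : p - q < 3/N^2 := by
    have h : p - q < (2*N-1)/(2*N*(N+1)) - (2*N-3)/(2*(N+1)*(N+2)) := by linarith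
    refine lt_trans h ?_
    rw [div_sub_div _ _ (by positivity) (by positivity), div_lt_div_iff₀ (by positivity) (by positivity)]
    ring_nf
    nlinarith
  have hd2 : q - p < 3/N^2 := by
    have h : q - p < (2*N+1)/(2*(N+1)*(N+2)) - (2*N-5)/(2*N*(N+1)) := by linarith
    refine lt_trans h ?_
    rw [div_sub_div _ _ (by positivity) (by positivity), div_lt_div_iff₀ (by positivity) (by positivity)]
    ring_nf
    nlinarith
  have b1 : 1 < 2*N*p := by rw [div_lt_iff₀ (by positivity)] at hp3; linarith
  have b2 : N*p < 1 := by rw [lt_div_iff₀ (by positivity)] at hp4; linarith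
  have b3 : 1 < 2*N*q := by rw [div_lt_iff₀ (by positivity)] at hq3; linarith
  have b4 : N*q < 1 := by rw [lt_div_iff₀ (by positivity)] at hq4; linarith
  have b5 : (p-q)*N^2 < 3 := by rw [lt_div_iff₀ (by positivity)] at hd1; nlinarith
  have b6 : (q-p)*N^2 < 3 := by rw [lt_div_iff₀ (by positivity)] at hd2; nlinarith
  exact core2 N p q hN b1 b2 b3 b4 b5 b6

theorem stmt7 (M a : ℕ → ℝ) (hpos : ∀ n, 0 < M n)
    (hM : ∀ n : ℕ, 75 ≤ n →
      1 + 1 / (2 * (n : ℝ) ^ 2) < M (n + 1) * M (n - 1) / (M n) ^ 2 ∧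
      M (n + 1) * M (n - 1) / (M n) ^ 2 < 1 + 5 / (2 * (n : ℝ) ^ 2))
    (ha : ∀ n, a n = M n / (Nat.factorial n : ℝ)) :
    (∀ n : ℕ, 75 ≤ n →
      (n : ℝ) / (n + 1) * (1 + 1 / (2 * (n : ℝ) ^ 2)) < a (n + 1) * a (n - 1) / (a n) ^ 2 ∧
      a (n + 1) * a (n - 1) / (a n) ^ 2 < (n : ℝ) / (n + 1) * (1 + 5 / (2 * (n : ℝ) ^ 2))) ∧
    (∀ n : ℕ, 75 ≤ n →
      0 < 4 * ((a n) ^ 2 - a (n - 1) * a (n + 1)) * ((a (n + 1)) ^ 2 - a n * a (n + 2))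
          - (a n * a (n + 1) - a (n - 1) * a (n + 2)) ^ 2) := by
  have hap : ∀ k, 0 < a k := by
    intro k
    rw [ha]
    have h1 := hpos k
    have h2 : (0:ℝ) < (Nat.factorial k : ℝ) := by
      exact_mod_cast Nat.factorial_pos k
    positivity
  -- key ratio identity
  have key : ∀ k : ℕ, a (k+1+1) * a (k+1-1) / (a (k+1)) ^ 2
      = ((k+1:ℕ) : ℝ) / ((k+1:ℕ) + 1) * (M (k+1+1) * M (k+1-1) / (M (k+1)) ^ 2) := by
    intro k
    simp only [Nat.add_sub_cancel]
    rw [ha, ha, ha]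
    have f1 : (((k+1).factorial : ℕ) : ℝ) = ((k:ℝ)+1) * (k.factorial : ℝ) := by
      push_cast [Nat.factorial_succ]; ring
    have f2 : (((k+1+1).factorial : ℕ) : ℝ) = ((k:ℝ)+2) * (((k+1).factorial : ℕ) : ℝ) := by
      push_cast [Nat.factorial_succ]; ring
    have h0 : (0:ℝ) < (k.factorial : ℝ) := by exact_mod_cast Nat.factorial_pos k
    have h1 : (0:ℝ) < ((k+1).factorial : ℝ) := by exact_mod_cast Nat.factorial_pos (k+1)
    have hM1 : M (k+1) ≠ 0 := ne_of_gt (hpos (k+1))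
    rw [f2, f1]
    push_cast
    field_simp
    ring
  have part1 : ∀ n : ℕ, 75 ≤ n →
      (n : ℝ) / (n + 1) * (1 + 1 / (2 * (n : ℝ) ^ 2)) < a (n + 1) * a (n - 1) / (a n) ^ 2 ∧
      a (n + 1) * a (n - 1) / (a n) ^ 2 < (n : ℝ) / (n + 1) * (1 + 5 / (2 * (n : ℝ) ^ 2)) := by
    intro n hn
    obtain ⟨m, rfl⟩ : ∃ m, n = m + 1 := ⟨n - 1, (Nat.succ_pred_eq_of_pos (by omega)).symm⟩
    have hkey := key m
    obtain ⟨hM1, hM2⟩ := hM (m+1) hn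
    have hc : (0:ℝ) < ((m+1:ℕ):ℝ) / ((m+1:ℕ) + 1) := by positivity
    constructor
    · rw [hkey]
      exact (mul_lt_mul_iff_right₀ hc).2 hM1
    · rw [hkey]
      exact (mul_lt_mul_iff_right₀ hc).2 hM2
  refine ⟨part1, ?_⟩
  intro n hn
  have hn1 : 75 ≤ n + 1 := by omega
  have hN : (75:ℝ) ≤ (n:ℝ) := by exact_mod_cast hn
  have hN0 : (0:ℝ) < (n:ℝ) := by linarith
  set N : ℝ := (n:ℝ) with hNdef
  set p : ℝ := 1 - a (n+1) * a (n-1) / (a n)^2 with hpdef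
  set q : ℝ := 1 - a (n+1+1) * a n / (a (n+1))^2 with hqdef
  obtain ⟨h1a, h1b⟩ := part1 n hn
  obtain ⟨h2a, h2b⟩ := part1 (n+1) hn1
  simp only [Nat.add_sub_cancel] at h2a h2b
  have hcast : ((n+1:ℕ):ℝ) = N + 1 := by push_cast; ring
  rw [hcast] at h2a h2b
  have h1 : (0:ℝ) < N + 1 := by linarith
  have h2 : (0:ℝ) < N + 2 := by linarith
  have hg : N / (N + 1) * (1 + 1 / (2 * N ^ 2)) = 1 - (2*N-1)/(2*N*(N+1)) := by
    field_simp; ring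
  have hf : N / (N + 1) * (1 + 5 / (2 * N ^ 2)) = 1 - (2*N-5)/(2*N*(N+1)) := by
    field_simp; ring
  have hg' : (N+1) / ((N+1) + 1) * (1 + 1 / (2 * (N+1) ^ 2)) = 1 - (2*N+1)/(2*(N+1)*(N+2)) := by
    field_simp; ring
  have hf' : (N+1) / ((N+1) + 1) * (1 + 5 / (2 * (N+1) ^ 2)) = 1 - (2*N-3)/(2*(N+1)*(N+2)) := by
    field_simp; ring
  rw [hg] at h1a
  rw [hf] at h1b
  rw [hg'] at h2a
  rw [hf'] at h2b
  have hp1 : (2*N-5)/(2*N*(N+1)) < p := by rw [hpdef]; linarith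
  have hp2 : p < (2*N-1)/(2*N*(N+1)) := by rw [hpdef]; linarith
  have hq1 : (2*N-3)/(2*(N+1)*(N+2)) < q := by rw [hqdef]; linarith
  have hq2 : q < (2*N+1)/(2*(N+1)*(N+2)) := by rw [hqdef]; linarith
  have ht := core N p q hN hp1 hp2 hq1 hq2
  have hiden : 4 * ((a n) ^ 2 - a (n - 1) * a (n + 1)) * ((a (n + 1)) ^ 2 - a n * a (n + 2))
          - (a n * a (n + 1) - a (n - 1) * a (n + 2)) ^ 2
      = (a n)^2 * (a (n+1))^2 * (2*p*q*(p+q) - (p-q)^2 - (p*q)^2) := by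
    rw [hpdef, hqdef]
    have ha1 : a n ≠ 0 := ne_of_gt (hap n)
    have ha2 : a (n+1) ≠ 0 := ne_of_gt (hap (n+1))
    field_simp
    ring
  rw [hiden]
  have h3 := hap n
  have h4 := hap (n+1)
  positivity
end

section
/- With g_n = n/(n+1) and f_n = (n/(n+1))(1 + 2/n^2), and t(x,y) = 4(1-x)(1-y)-(1-xy)^2, the following identities and inequalities hold: t(g_n,g_{n+1}) = 4/((n+1)(n+2)^2) > 0 for n ≥ 1; t(g_n,f_{n+1}) = (4n^3 - 8n^2 - 20n - 12)/((n+1)^4(n+2)^2) > 0 for n > 3; t(f_n,g_{n+1}) = (4n^2 - 12n - 4)/(n^2(n+1)(n+2)^2) > 0 for n > 3; t(f_n,f_{n+1}) = (4n^5 - 12n^4 + 4n^3 + 12n^2 - 8n - 36)/(n^2(n+1)^4(n+2)^2) > 0 for n > 2. -/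
theorem stmt8 (t : ℝ → ℝ → ℝ)
    (ht : ∀ x y, t x y = 4 * (1 - x) * (1 - y) - (1 - x * y) ^ 2)
    (g f : ℕ → ℝ)
    (hg : ∀ n : ℕ, 1 ≤ n → g n = (n : ℝ) / (n + 1))
    (hf : ∀ n : ℕ, 1 ≤ n → f n = (n : ℝ) / (n + 1) * (1 + 2 / (n : ℝ) ^ 2)) :
    (∀ n : ℕ, 1 ≤ n →
      t (g n) (g (n + 1)) = 4 / (((n : ℝ) + 1) * ((n : ℝ) + 2) ^ 2) ∧
      0 < t (g n) (g (n + 1))) ∧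
    (∀ n : ℕ, 3 < n →
      t (g n) (f (n + 1)) = (4 * (n : ℝ) ^ 3 - 8 * (n : ℝ) ^ 2 - 20 * (n : ℝ) - 12) /
        (((n : ℝ) + 1) ^ 4 * ((n : ℝ) + 2) ^ 2) ∧
      0 < t (g n) (f (n + 1))) ∧
    (∀ n : ℕ, 3 < n →
      t (f n) (g (n + 1)) = (4 * (n : ℝ) ^ 2 - 12 * (n : ℝ) - 4) /
        ((n : ℝ) ^ 2 * ((n : ℝ) + 1) * ((n : ℝ) + 2) ^ 2) ∧
      0 < t (f n) (g (n + 1))) ∧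
    (∀ n : ℕ, 2 < n →
      t (f n) (f (n + 1)) = (4 * (n : ℝ) ^ 5 - 12 * (n : ℝ) ^ 4 + 4 * (n : ℝ) ^ 3
          + 12 * (n : ℝ) ^ 2 - 8 * (n : ℝ) - 36) /
        ((n : ℝ) ^ 2 * ((n : ℝ) + 1) ^ 4 * ((n : ℝ) + 2) ^ 2) ∧
      0 < t (f n) (f (n + 1))) := by
  refine ⟨?_, ?_, ?_, ?_⟩
  · intro n hn
    have hn1 : (1 : ℝ) ≤ n := by exact_mod_cast hn
    have h0 : (0:ℝ) < (n:ℝ) + 1 := by linarith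
    have h2 : (0:ℝ) < (n:ℝ) + 2 := by linarith
    have e : t (g n) (g (n + 1)) = 4 / (((n : ℝ) + 1) * ((n : ℝ) + 2) ^ 2) := by
      rw [ht, hg n hn, hg (n+1) (by omega)]
      push_cast
      field_simp
      ring
    exact ⟨e, e ▸ by positivity⟩
  · intro n hn
    have hn1 : (4 : ℝ) ≤ n := by exact_mod_cast hn
    have h0 : (0:ℝ) < (n:ℝ) + 1 := by linarith
    have h2 : (0:ℝ) < (n:ℝ) + 2 := by linarith
    have e : t (g n) (f (n + 1)) = (4 * (n : ℝ) ^ 3 - 8 * (n : ℝ) ^ 2 - 20 * (n : ℝ) - 12) /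
        (((n : ℝ) + 1) ^ 4 * ((n : ℝ) + 2) ^ 2) := by
      rw [ht, hg n (by omega), hf (n+1) (by omega)]
      push_cast
      field_simp
      ring
    refine ⟨e, e ▸ div_pos (by nlinarith) (by positivity)⟩
  · intro n hn
    have hn1 : (4 : ℝ) ≤ n := by exact_mod_cast hn
    have hn0 : (0:ℝ) < (n:ℝ) := by linarith
    have h0 : (0:ℝ) < (n:ℝ) + 1 := by linarith
    have h2 : (0:ℝ) < (n:ℝ) + 2 := by linarith
    have e : t (f n) (g (n + 1)) = (4 * (n : ℝ) ^ 2 - 12 * (n : ℝ) - 4) /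
        ((n : ℝ) ^ 2 * ((n : ℝ) + 1) * ((n : ℝ) + 2) ^ 2) := by
      rw [ht, hf n (by omega), hg (n+1) (by omega)]
      push_cast
      field_simp
      ring
    refine ⟨e, e ▸ div_pos (by nlinarith) (by positivity)⟩
  · intro n hn
    have hn1 : (3 : ℝ) ≤ n := by exact_mod_cast hn
    have hn0 : (0:ℝ) < (n:ℝ) := by linarith
    have h0 : (0:ℝ) < (n:ℝ) + 1 := by linarith
    have h2 : (0:ℝ) < (n:ℝ) + 2 := by linarith
    have e : t (f n) (f (n + 1)) = (4 * (n : ℝ) ^ 5 - 12 * (n : ℝ) ^ 4 + 4 * (n : ℝ) ^ 3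
          + 12 * (n : ℝ) ^ 2 - 8 * (n : ℝ) - 36) /
        ((n : ℝ) ^ 2 * ((n : ℝ) + 1) ^ 4 * ((n : ℝ) + 2) ^ 2) := by
      rw [ht, hf n (by omega), hf (n+1) (by omega)]
      push_cast
      field_simp
      ring
    refine ⟨e, e ▸ div_pos (by nlinarith [mul_nonneg (mul_nonneg (by linarith : (0:ℝ) ≤ (n:ℝ)-3) (le_of_lt (pow_pos hn0 4))) (le_of_lt hn0), mul_nonneg (by linarith : (0:ℝ) ≤ (n:ℝ)-3) (le_of_lt (pow_pos hn0 3)), sq_nonneg ((n:ℝ)-3)]) (by positivity)⟩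
end

section
/- Suppose b_n is a positive sequence satisfying 1 < b_{n+1}b_{n-1}/b_n^2 < 1 + 3/n^2 for all n ≥ 16. Then a_n = b_n/n! satisfies n/(n+1) < a_{n+1}a_{n-1}/a_n^2 < (n/(n+1))(1 + 3/n^2) for all n ≥ 16, and with g_n = n/(n+1), f_n = (n/(n+1))(1+3/n^2), the quantities t(g_n,g_{n+1}) = 4/((n+1)(n+2)^2), t(g_n,f_{n+1}) = (4n^3-21n^2-36n-20)/((n+1)^4(n+2)^2), t(f_n,g_{n+1}) = (4n^2-21n-9)/(n^2(n+1)(n+2)^2), t(f_n,f_{n+1}) = (4n^5-24n^4+36n^3+16n^2-48n-144)/(n^2(n+1)^4(n+2)^2) are all positive for n ≥ 8; hence a_n satisfies the higher order Turán inequality for all n ≥ 16. -/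
lemma interp_x (G F x y : ℝ) (hGF : G < F) (hG : G ≤ x) (hF : x ≤ F)
    (h1 : 0 < 4*(1-G)*(1-y) - (1-G*y)^2) (h2 : 0 < 4*(1-F)*(1-y) - (1-F*y)^2) :
    0 < 4*(1-x)*(1-y) - (1-x*y)^2 := by
  rcases lt_or_ge x F with h | h
  · nlinarith [mul_pos h1 (sub_pos.2 h), mul_nonneg h2.le (sub_nonneg.2 hG),
      mul_nonneg (mul_nonneg (sq_nonneg y) (sub_nonneg.2 hG)) (sub_nonneg.2 h.le),
      sub_pos.2 hGF]
  · have : x = F := le_antisymm hF h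
    rw [this]; exact h2

lemma corner_pos (G F G' F' x y : ℝ) (hGF : G < F) (hGF' : G' < F')
    (hx1 : G ≤ x) (hx2 : x ≤ F) (hy1 : G' ≤ y) (hy2 : y ≤ F')
    (h11 : 0 < 4*(1-G)*(1-G') - (1-G*G')^2)
    (h12 : 0 < 4*(1-G)*(1-F') - (1-G*F')^2)
    (h21 : 0 < 4*(1-F)*(1-G') - (1-F*G')^2)
    (h22 : 0 < 4*(1-F)*(1-F') - (1-F*F')^2) :
    0 < 4*(1-x)*(1-y) - (1-x*y)^2 := by
  have hGy : 0 < 4*(1-G)*(1-y) - (1-G*y)^2 := by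
    have := interp_x G' F' y G hGF' hy1 hy2 (by nlinarith) (by nlinarith)
    nlinarith [this]
  have hFy : 0 < 4*(1-F)*(1-y) - (1-F*y)^2 := by
    have := interp_x G' F' y F hGF' hy1 hy2 (by nlinarith) (by nlinarith)
    nlinarith [this]
  exact interp_x G F x y hGF hx1 hx2 hGy hFy

lemma corners (n : ℝ) (hn : 8 ≤ n) :
    (4*(1 - n/(n+1))*(1 - (n+1)/(n+2)) - (1 - (n/(n+1))*((n+1)/(n+2)))^2
      = 4/((n+1)*(n+2)^2)) ∧
    (4*(1 - n/(n+1))*(1 - (n+1)/(n+2)*(1+3/(n+1)^2))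
      - (1 - (n/(n+1))*((n+1)/(n+2)*(1+3/(n+1)^2)))^2
      = (4*n^3 - 21*n^2 - 36*n - 20)/((n+1)^4*(n+2)^2)) ∧
    (4*(1 - n/(n+1)*(1+3/n^2))*(1 - (n+1)/(n+2))
      - (1 - (n/(n+1)*(1+3/n^2))*((n+1)/(n+2)))^2
      = (4*n^2 - 21*n - 9)/(n^2*(n+1)*(n+2)^2)) ∧
    (4*(1 - n/(n+1)*(1+3/n^2))*(1 - (n+1)/(n+2)*(1+3/(n+1)^2))
      - (1 - (n/(n+1)*(1+3/n^2))*((n+1)/(n+2)*(1+3/(n+1)^2)))^2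
      = (4*n^5 - 24*n^4 + 36*n^3 + 16*n^2 - 48*n - 144)/(n^2*(n+1)^4*(n+2)^2)) := by
  have h0 : n ≠ 0 := by linarith
  have h1 : n + 1 ≠ 0 := by linarith
  have h2 : n + 2 ≠ 0 := by linarith
  refine ⟨?_, ?_, ?_, ?_⟩ <;> (field_simp; ring)

lemma numpos (n : ℝ) (hn : 8 ≤ n) :
    0 < 4*n^3 - 21*n^2 - 36*n - 20 ∧ 0 < 4*n^2 - 21*n - 9 ∧
    0 < 4*n^5 - 24*n^4 + 36*n^3 + 16*n^2 - 48*n - 144 := by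
  have hm : (0:ℝ) ≤ n - 8 := by linarith
  refine ⟨?_, ?_, ?_⟩ <;>
    nlinarith [pow_nonneg hm 5, pow_nonneg hm 4, pow_nonneg hm 3, pow_nonneg hm 2, hm]

lemma corners_pos (n : ℝ) (hn : 8 ≤ n) :
    (0 < 4*(1 - n/(n+1))*(1 - (n+1)/(n+2)) - (1 - (n/(n+1))*((n+1)/(n+2)))^2) ∧
    (0 < 4*(1 - n/(n+1))*(1 - (n+1)/(n+2)*(1+3/(n+1)^2))
      - (1 - (n/(n+1))*((n+1)/(n+2)*(1+3/(n+1)^2)))^2) ∧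
    (0 < 4*(1 - n/(n+1)*(1+3/n^2))*(1 - (n+1)/(n+2))
      - (1 - (n/(n+1)*(1+3/n^2))*((n+1)/(n+2)))^2) ∧
    (0 < 4*(1 - n/(n+1)*(1+3/n^2))*(1 - (n+1)/(n+2)*(1+3/(n+1)^2))
      - (1 - (n/(n+1)*(1+3/n^2))*((n+1)/(n+2)*(1+3/(n+1)^2)))^2) := by
  obtain ⟨e1, e2, e3, e4⟩ := corners n hn
  obtain ⟨p1, p2, p3⟩ := numpos n hn
  have hn0 : (0:ℝ) < n := by linarith
  refine ⟨?_, ?_, ?_, ?_⟩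
  · rw [e1]; positivity
  · rw [e2]; apply div_pos p1; positivity
  · rw [e3]; apply div_pos p2; positivity
  · rw [e4]; apply div_pos p3; positivity

lemma lt_mul_one_add (q e : ℝ) (hq : 0 < q) (he : 0 < e) : q < q * (1 + e) := by
  nlinarith

theorem stmt9 (b a g f : ℕ → ℝ) (hpos : ∀ n, 0 < b n)
    (hb : ∀ n : ℕ, 16 ≤ n →
      1 < b (n + 1) * b (n - 1) / (b n) ^ 2 ∧
      b (n + 1) * b (n - 1) / (b n) ^ 2 < 1 + 3 / (n : ℝ) ^ 2)
    (ha : ∀ n, a n = b n / (Nat.factorial n : ℝ))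
    (hg : ∀ n : ℕ, 1 ≤ n → g n = (n : ℝ) / (n + 1))
    (hf : ∀ n : ℕ, 1 ≤ n → f n = (n : ℝ) / (n + 1) * (1 + 3 / (n : ℝ) ^ 2))
    (t : ℝ → ℝ → ℝ)
    (ht : ∀ x y, t x y = 4 * (1 - x) * (1 - y) - (1 - x * y) ^ 2) :
    (∀ n : ℕ, 16 ≤ n →
      (n : ℝ) / (n + 1) < a (n + 1) * a (n - 1) / (a n) ^ 2 ∧
      a (n + 1) * a (n - 1) / (a n) ^ 2 < (n : ℝ) / (n + 1) * (1 + 3 / (n : ℝ) ^ 2)) ∧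
    (∀ n : ℕ, 8 ≤ n →
      t (g n) (g (n + 1)) = 4 / (((n : ℝ) + 1) * ((n : ℝ) + 2) ^ 2) ∧
      t (g n) (f (n + 1)) = (4 * (n : ℝ) ^ 3 - 21 * (n : ℝ) ^ 2 - 36 * (n : ℝ) - 20) /
        (((n : ℝ) + 1) ^ 4 * ((n : ℝ) + 2) ^ 2) ∧
      t (f n) (g (n + 1)) = (4 * (n : ℝ) ^ 2 - 21 * (n : ℝ) - 9) /
        ((n : ℝ) ^ 2 * ((n : ℝ) + 1) * ((n : ℝ) + 2) ^ 2) ∧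
      t (f n) (f (n + 1)) = (4 * (n : ℝ) ^ 5 - 24 * (n : ℝ) ^ 4 + 36 * (n : ℝ) ^ 3
          + 16 * (n : ℝ) ^ 2 - 48 * (n : ℝ) - 144) /
        ((n : ℝ) ^ 2 * ((n : ℝ) + 1) ^ 4 * ((n : ℝ) + 2) ^ 2) ∧
      0 < t (g n) (g (n + 1)) ∧ 0 < t (g n) (f (n + 1)) ∧
      0 < t (f n) (g (n + 1)) ∧ 0 < t (f n) (f (n + 1))) ∧
    (∀ n : ℕ, 16 ≤ n →
      0 < 4 * ((a n) ^ 2 - a (n - 1) * a (n + 1)) * ((a (n + 1)) ^ 2 - a n * a (n + 2))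
          - (a n * a (n + 1) - a (n - 1) * a (n + 2)) ^ 2) := by
  have hA : ∀ k, 0 < a k := fun k => by
    rw [ha]; exact div_pos (hpos k) (by exact_mod_cast Nat.factorial_pos k)
  -- key ratio bounds
  have hratio : ∀ m : ℕ, 15 ≤ m →
      ((m:ℝ)+1)/((m:ℝ)+2) < a (m+2) * a m / a (m+1)^2 ∧
      a (m+2) * a m / a (m+1)^2 < ((m:ℝ)+1)/((m:ℝ)+2) * (1 + 3/((m:ℝ)+1)^2) := by
    intro m hm
    have hB := hb (m+1) (by omega)
    simp only [Nat.add_sub_cancel] at hB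
    push_cast at hB
    have key : a (m+2) * a m / a (m+1)^2
        = (b (m+2) * b m / b (m+1)^2) * (((m:ℝ)+1)/((m:ℝ)+2)) := by
      have hf0 : (0:ℝ) < (Nat.factorial m : ℝ) := by exact_mod_cast Nat.factorial_pos m
      have hb1 : b (m+1) ≠ 0 := (hpos _).ne'
      have hb2 : b (m+2) ≠ 0 := (hpos _).ne'
      have hb0 : b m ≠ 0 := (hpos _).ne'
      have hm1 : ((m:ℝ)+1) ≠ 0 := by positivity
      have hm2 : ((m:ℝ)+2) ≠ 0 := by positivity
      rw [ha, ha, ha]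
      simp only [Nat.factorial_succ]
      push_cast
      field_simp
      ring
    have hq : (0:ℝ) < ((m:ℝ)+1)/((m:ℝ)+2) := by positivity
    constructor
    · rw [key]; nlinarith [hB.1, hq]
    · rw [key]; nlinarith [hB.2, hq]
  have part1 : ∀ n : ℕ, 16 ≤ n →
      (n : ℝ) / (n + 1) < a (n + 1) * a (n - 1) / (a n) ^ 2 ∧
      a (n + 1) * a (n - 1) / (a n) ^ 2 < (n : ℝ) / (n + 1) * (1 + 3 / (n : ℝ) ^ 2) := by
    intro n hn
    obtain ⟨m, rfl⟩ : ∃ m, n = m + 1 := ⟨n - 1, by omega⟩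
    have hm : 15 ≤ m := by omega
    have h := hratio m hm
    simp only [Nat.add_sub_cancel]
    push_cast
    rw [show ((m:ℝ)+2) = (m:ℝ)+1+1 by ring] at h
    exact h
  refine ⟨part1, ?_, ?_⟩
  · -- part 2
    intro n hn
    have hn8 : (8:ℝ) ≤ (n:ℝ) := by exact_mod_cast hn
    obtain ⟨e1, e2, e3, e4⟩ := corners (n:ℝ) hn8
    obtain ⟨q1, q2, q3, q4⟩ := corners_pos (n:ℝ) hn8
    have E1 : t (g n) (g (n+1)) = 4 / (((n:ℝ)+1)*((n:ℝ)+2)^2) := by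
      rw [ht, hg n (by omega), hg (n+1) (by omega)]
      push_cast
      rw [show ((n:ℝ)+1+1) = (n:ℝ)+2 by ring]
      exact e1
    have E2 : t (g n) (f (n+1)) = (4*(n:ℝ)^3 - 21*(n:ℝ)^2 - 36*(n:ℝ) - 20) /
        (((n:ℝ)+1)^4*((n:ℝ)+2)^2) := by
      rw [ht, hg n (by omega), hf (n+1) (by omega)]
      push_cast
      rw [show ((n:ℝ)+1+1) = (n:ℝ)+2 by ring]
      exact e2
    have E3 : t (f n) (g (n+1)) = (4*(n:ℝ)^2 - 21*(n:ℝ) - 9) /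
        ((n:ℝ)^2*((n:ℝ)+1)*((n:ℝ)+2)^2) := by
      rw [ht, hf n (by omega), hg (n+1) (by omega)]
      push_cast
      rw [show ((n:ℝ)+1+1) = (n:ℝ)+2 by ring]
      exact e3
    have E4 : t (f n) (f (n+1)) = (4*(n:ℝ)^5 - 24*(n:ℝ)^4 + 36*(n:ℝ)^3 + 16*(n:ℝ)^2
        - 48*(n:ℝ) - 144) / ((n:ℝ)^2*((n:ℝ)+1)^4*((n:ℝ)+2)^2) := by
      rw [ht, hf n (by omega), hf (n+1) (by omega)]
      push_cast
      rw [show ((n:ℝ)+1+1) = (n:ℝ)+2 by ring]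
      exact e4
    refine ⟨E1, E2, E3, E4, ?_, ?_, ?_, ?_⟩
    · rw [E1]; rw [← e1]; exact q1
    · rw [E2]; rw [← e2]; exact q2
    · rw [E3]; rw [← e3]; exact q3
    · rw [E4]; rw [← e4]; exact q4
  · -- part 3
    intro n hn
    obtain ⟨m, rfl⟩ : ∃ m, n = m + 1 := ⟨n - 1, by omega⟩
    have hm : 15 ≤ m := by omega
    have hmr : (15:ℝ) ≤ (m:ℝ) := by exact_mod_cast hm
    set x := a (m+2) * a m / a (m+1)^2 with hxdef
    set y := a (m+3) * a (m+1) / a (m+2)^2 with hydef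
    have hx := hratio m hm
    have hy' := hratio (m+1) (by omega)
    push_cast at hy'
    have hy : ((m:ℝ)+2)/((m:ℝ)+3) < y ∧
        y < ((m:ℝ)+2)/((m:ℝ)+3) * (1 + 3/((m:ℝ)+2)^2) := by
      rw [show ((m:ℝ)+2) = (m:ℝ)+1+1 by ring, show ((m:ℝ)+3) = (m:ℝ)+1+2 by ring]
      exact hy'
    -- corners at n = m+1
    have hc := corners_pos ((m:ℝ)+1) (by linarith)
    rw [show ((m:ℝ)+1+1) = (m:ℝ)+2 by ring, show ((m:ℝ)+1+2) = (m:ℝ)+3 by ring] at hc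
    obtain ⟨c1, c2, c3, c4⟩ := hc
    have hGF : ((m:ℝ)+1)/((m:ℝ)+2) < ((m:ℝ)+1)/((m:ℝ)+2) * (1 + 3/((m:ℝ)+1)^2) :=
      lt_mul_one_add _ _ (by positivity) (by positivity)
    have hGF' : ((m:ℝ)+2)/((m:ℝ)+3) < ((m:ℝ)+2)/((m:ℝ)+3) * (1 + 3/((m:ℝ)+2)^2) :=
      lt_mul_one_add _ _ (by positivity) (by positivity)
    have tpos : 0 < 4*(1-x)*(1-y) - (1-x*y)^2 :=
      corner_pos _ _ _ _ x y hGF hGF' hx.1.le hx.2.le hy.1.le hy.2.le c1 c2 c3 c4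
    have ha1 : a (m+1) ≠ 0 := (hA _).ne'
    have ha2 : a (m+2) ≠ 0 := (hA _).ne'
    have hkey : 4 * ((a (m+1))^2 - a m * a (m+2)) * ((a (m+2))^2 - a (m+1) * a (m+3))
        - (a (m+1) * a (m+2) - a m * a (m+3))^2
        = a (m+1)^2 * a (m+2)^2 * (4*(1-x)*(1-y) - (1-x*y)^2) := by
      rw [hxdef, hydef]
      field_simp
    have : 0 < 4 * ((a (m+1))^2 - a m * a (m+2)) * ((a (m+2))^2 - a (m+1) * a (m+3))
        - (a (m+1) * a (m+2) - a m * a (m+3))^2 := by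
      rw [hkey]
      exact mul_pos (mul_pos (pow_pos (hA _) 2) (pow_pos (hA _) 2)) tpos
    simpa only [Nat.add_sub_cancel] using this
end

section
/- Let r : ℝ → ℝ be a polynomial (or rational function defined for large x). Then for every positive integer K there exist rational functions r_1, ..., r_K such that r(log(n+1)) - r(log n) = Σ_{i=1}^K r_i(log n)/n^i + o(1/n^K) as n → ∞, with r_1(x) = r'(x) and r_2(x) = (r''(x) - r'(x))/2. -/
open Real Filter Asymptotics Polynomial Topology

lemma log_pow_isLittleO (i : ℕ) :
    (fun n : ℕ => Real.log n ^ i) =o[atTop] fun n : ℕ => (n : ℝ) := by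
  have h := (isLittleO_log_rpow_rpow_atTop (i : ℝ) one_pos).comp_tendsto
      (tendsto_natCast_atTop_atTop (R := ℝ))
  simpa [Function.comp_def, Real.rpow_natCast] using h

lemma poly_log_isLittleO (p : Polynomial ℝ) :
    (fun n : ℕ => p.eval (Real.log n)) =o[atTop] fun n : ℕ => (n : ℝ) := by
  have h : (fun n : ℕ => ∑ i ∈ Finset.range (p.natDegree + 1),
      p.coeff i * Real.log n ^ i) =o[atTop] fun n : ℕ => (n : ℝ) :=
    IsLittleO.fun_sum fun i _ => (log_pow_isLittleO i).const_mul_left _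
  exact h.congr' (by filter_upwards with n; rw [Polynomial.eval_eq_sum_range]) EventuallyEq.rfl

lemma inv_pow_isBigO {s t : ℕ} (hst : s ≤ t) :
    (fun n : ℕ => 1 / (n : ℝ) ^ t) =O[atTop] fun n : ℕ => 1 / (n : ℝ) ^ s := by
  rw [isBigO_iff]
  refine ⟨1, ?_⟩
  filter_upwards [eventually_ge_atTop 1] with n hn
  have hn1 : (1 : ℝ) ≤ (n : ℝ) := by exact_mod_cast hn
  have h1 : (0:ℝ) < (n:ℝ) ^ s := by positivity
  rw [one_mul, Real.norm_eq_abs, Real.norm_eq_abs, abs_of_nonneg (by positivity),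
    abs_of_nonneg (by positivity)]
  exact one_div_le_one_div_of_le h1 (pow_le_pow_right₀ hn1 hst)

lemma log_expansion (M : ℕ) :
    (fun n : ℕ => Real.log (1 + 1 / n) -
      ∑ k ∈ Finset.Icc 1 M, (-1 : ℝ) ^ (k - 1) / k * (1 / n) ^ k)
      =O[atTop] fun n : ℕ => 1 / (n : ℝ) ^ (M + 1) := by
  rw [isBigO_iff]
  refine ⟨2, ?_⟩
  filter_upwards [eventually_ge_atTop 2] with n hn
  have hn0 : (0 : ℝ) < n := by positivity
  have hn2 : (2 : ℝ) ≤ n := by exact_mod_cast hn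
  have hxlt : |(-(1 / (n : ℝ)))| < 1 := by
    rw [abs_neg, abs_of_nonneg (by positivity)]
    rw [div_lt_one hn0]; linarith
  have key := Real.abs_log_sub_add_sum_range_le hxlt M
  have hsum : (∑ i ∈ Finset.range M, (-(1 / (n : ℝ))) ^ (i + 1) / (↑i + 1))
      = -∑ k ∈ Finset.Icc 1 M, (-1 : ℝ) ^ (k - 1) / k * (1 / n) ^ k := by
    rw [← Finset.sum_neg_distrib]
    rw [show Finset.Icc 1 M = Finset.Ico 1 (M + 1) by rw [Finset.Ico_add_one_right_eq_Icc],
      Finset.sum_Ico_eq_sum_range]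
    apply Finset.sum_congr (by rw [Nat.add_sub_cancel])
    intro i _
    have h1 : (1 + i) - 1 = i := by omega
    have h2 : ((1 + i : ℕ) : ℝ) = (i : ℝ) + 1 := by push_cast; ring
    rw [h1, h2, neg_pow]
    ring
  rw [hsum] at key
  have habs : |(-(1 / (n:ℝ)))| = 1 / n := by
    rw [abs_neg, abs_of_nonneg (by positivity)]
  rw [habs] at key
  have h3 : Real.log (1 - -(1 / (n:ℝ))) = Real.log (1 + 1/n) := by norm_num
  rw [h3] at key
  have h4 : (1:ℝ) - 1/n ≥ 1/2 := by
    have : 1/(n:ℝ) ≤ 1/2 := one_div_le_one_div_of_le (by norm_num) hn2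
    linarith
  have h5 : (1/(n:ℝ))^(M+1) / (1 - 1/n) ≤ 2 * (1/n)^(M+1) := by
    rw [div_le_iff₀ (by linarith)]
    have : (0:ℝ) ≤ (1/(n:ℝ))^(M+1) := by positivity
    nlinarith
  rw [Real.norm_eq_abs, Real.norm_eq_abs]
  have h6 : |Real.log (1 + 1/(n:ℝ)) - ∑ k ∈ Finset.Icc 1 M, (-1:ℝ)^(k-1)/k * (1/n)^k|
      = |(-∑ k ∈ Finset.Icc 1 M, (-1:ℝ)^(k-1)/k * (1/n)^k) + Real.log (1 + 1/n)| := by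
    rw [neg_add_eq_sub]
  rw [h6]
  calc |(-∑ k ∈ Finset.Icc 1 M, (-1:ℝ)^(k-1)/↑k * (1/↑n)^k) + Real.log (1 + 1/↑n)|
      ≤ (1/(n:ℝ))^(M+1) / (1 - 1/n) := key
    _ ≤ 2 * (1/n)^(M+1) := h5
    _ ≤ 2 * |1/(n:ℝ)^(M+1)| := by
        rw [abs_of_nonneg (by positivity), one_div_pow]

lemma term_est (p L : Polynomial ℝ) (K M j : ℕ) (hKM : K ≤ M) (hj : 1 ≤ j)
    (h0 : L.coeff 0 = 0)
    (hδE : (fun n : ℕ => Real.log (1 + 1 / n) - L.eval (1 / (n : ℝ))) =O[atTop]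
      fun n : ℕ => 1 / (n : ℝ) ^ (M + 1)) :
    (fun n : ℕ => p.eval (Real.log n) *
        ((Real.log (1 + 1 / n)) ^ j - ∑ i ∈ Finset.Icc 1 K, (L ^ j).coeff i * (1 / (n : ℝ)) ^ i))
      =o[atTop] fun n : ℕ => 1 / (n : ℝ) ^ K := by
  set δ : ℕ → ℝ := fun n => Real.log (1 + 1 / n) with hδ
  set E : ℕ → ℝ := fun n => L.eval (1 / (n:ℝ)) with hE
  have hδt : Tendsto δ atTop (𝓝 0) := by
    have h1 : Tendsto (fun n : ℕ => 1 + 1 / (n : ℝ)) atTop (𝓝 1) := by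
      simpa using (tendsto_const_nhds (x := (1:ℝ))).add tendsto_one_div_atTop_nhds_zero_nat
    have h2 := (Real.continuousAt_log (by norm_num : (1 : ℝ) ≠ 0)).tendsto.comp h1
    simpa [hδ, Function.comp_def] using h2
  have hEt : Tendsto E atTop (𝓝 (L.eval 0)) :=
    (L.continuous.tendsto 0).comp tendsto_one_div_atTop_nhds_zero_nat
  have hpowj : (fun n : ℕ => δ n ^ j - E n ^ j) =O[atTop]
      fun n : ℕ => 1 / (n : ℝ) ^ (K + 1) := by
    have hgeom : ∀ n : ℕ, δ n ^ j - E n ^ j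
        = (∑ t ∈ Finset.range j, δ n ^ t * E n ^ (j - 1 - t)) * (δ n - E n) :=
      fun n => (geom_sum₂_mul (δ n) (E n) j).symm
    have hbd : (fun n : ℕ => ∑ t ∈ Finset.range j, δ n ^ t * E n ^ (j - 1 - t))
        =O[atTop] (fun _ : ℕ => (1 : ℝ)) := by
      have ht : Tendsto (fun n : ℕ => ∑ t ∈ Finset.range j, δ n ^ t * E n ^ (j - 1 - t)) atTop
          (𝓝 (∑ t ∈ Finset.range j, (0 : ℝ) ^ t * (L.eval 0) ^ (j - 1 - t))) :=
        tendsto_finset_sum _ fun t _ => (hδt.pow t).mul (hEt.pow (j - 1 - t))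
      exact ht.isBigO_one ℝ
    have h1 := hbd.mul hδE
    have h2 := h1.trans ((inv_pow_isBigO (show K + 1 ≤ M + 1 by omega)).const_mul_left 1 |>.congr'
      (by filter_upwards with n; ring_nf) EventuallyEq.rfl)
    refine h2.congr' ?_ EventuallyEq.rfl
    filter_upwards with n
    rw [hgeom]
  have hEtr : (fun n : ℕ => E n ^ j - ∑ i ∈ Finset.Icc 1 K, (L ^ j).coeff i * (1 / (n : ℝ)) ^ i)
      =O[atTop] fun n : ℕ => 1 / (n : ℝ) ^ (K + 1) := by
    set N := max ((L ^ j).natDegree + 1) (K + 1) with hN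
    have hN1 : (L ^ j).natDegree < N := by omega
    have hsub2 : Finset.Icc 1 K ⊆ Finset.range N := by
      intro i hi
      simp only [Finset.mem_Icc] at hi
      simp only [Finset.mem_range]
      omega
    have heq : ∀ n : ℕ, E n ^ j - ∑ i ∈ Finset.Icc 1 K, (L ^ j).coeff i * (1 / (n : ℝ)) ^ i
        = ∑ i ∈ Finset.range N \ Finset.Icc 1 K, (L ^ j).coeff i * (1 / (n : ℝ)) ^ i := by
      intro n
      have h3 : E n ^ j = (L ^ j).eval (1 / (n:ℝ)) := by rw [Polynomial.eval_pow]
      rw [h3, Polynomial.eval_eq_sum_range' hN1, ← Finset.sum_sdiff hsub2]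
      ring
    have hcoeff0 : (L ^ j).coeff 0 = 0 := by
      have := map_pow Polynomial.constantCoeff L j
      simp only [Polynomial.constantCoeff_apply] at this
      rw [this, h0, zero_pow (by omega)]
    have h4 : (fun n : ℕ => ∑ i ∈ Finset.range N \ Finset.Icc 1 K,
        (L ^ j).coeff i * (1 / (n : ℝ)) ^ i) =O[atTop] fun n : ℕ => 1 / (n : ℝ) ^ (K + 1) := by
      refine IsBigO.fun_sum fun i hi => ?_
      rcases Finset.mem_sdiff.1 hi with ⟨hiN, hiK⟩
      rcases Nat.eq_zero_or_pos i with h0' | hpos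
      · subst h0'
        simp only [hcoeff0, zero_mul]
        exact isBigO_zero _ _
      · have hiK1 : K + 1 ≤ i := by
          simp only [Finset.mem_Icc, not_and, not_le] at hiK
          omega
        have h5 : (fun n : ℕ => (1 / (n : ℝ)) ^ i) =O[atTop]
            fun n : ℕ => 1 / (n : ℝ) ^ (K + 1) := by
          refine (IsBigO.congr' (inv_pow_isBigO hiK1) ?_ EventuallyEq.rfl)
          filter_upwards with n
          rw [one_div_pow]
        exact h5.const_mul_left _
    refine h4.congr' ?_ EventuallyEq.rfl
    filter_upwards with n
    rw [heq]
  have hBig : (fun n : ℕ => δ n ^ j - ∑ i ∈ Finset.Icc 1 K, (L ^ j).coeff i * (1 / (n : ℝ)) ^ i)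
      =O[atTop] fun n : ℕ => 1 / (n : ℝ) ^ (K + 1) := by
    have h6 := hpowj.add hEtr
    refine h6.congr' ?_ EventuallyEq.rfl
    filter_upwards with n
    ring
  have hmain := (poly_log_isLittleO p).mul_isBigO hBig
  refine hmain.congr' EventuallyEq.rfl ?_
  filter_upwards [eventually_ge_atTop 1] with n hn
  have hn0 : (n : ℝ) ≠ 0 := by
    have : (1:ℝ) ≤ (n:ℝ) := by exact_mod_cast hn
    linarith
  rw [pow_succ]
  field_simp
theorem stmt11 (r : Polynomial ℝ) (K : ℕ) (hK : 1 ≤ K) :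
    ∃ rs : ℕ → Polynomial ℝ,
      rs 1 = derivative r ∧
      rs 2 = Polynomial.C (1 / 2 : ℝ) * (derivative (derivative r) - derivative r) ∧
      (fun n : ℕ => r.eval (Real.log (n + 1)) - r.eval (Real.log n)
          - ∑ i ∈ Finset.Icc 1 K, (rs i).eval (Real.log n) / (n : ℝ) ^ i)
        =o[atTop] fun n : ℕ => 1 / (n : ℝ) ^ K := by
  set D := r.natDegree with hD
  set J := D + 2 with hJ
  set M := max K 2 with hM
  set a : ℕ → ℝ := fun k => (-1 : ℝ) ^ (k - 1) / k with ha
  set S : Polynomial ℝ := ∑ k ∈ Finset.Icc 1 M, Polynomial.C (a k) * Polynomial.X ^ (k - 1)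
    with hS
  set L : Polynomial ℝ := S * Polynomial.X with hL
  have hM2 : 2 ≤ M := le_max_right _ _
  have hMK : K ≤ M := le_max_left _ _
  have hS0 : S.coeff 0 = 1 := by
    rw [hS, Polynomial.finset_sum_coeff]
    rw [Finset.sum_eq_single 1]
    · simp [ha]
    · intro k hk hk1
      simp only [Polynomial.coeff_C_mul, Polynomial.coeff_X_pow]
      rw [if_neg (by simp only [Finset.mem_Icc] at hk; omega)]
      ring
    · intro h
      exact absurd (Finset.mem_Icc.2 ⟨le_refl 1, by omega⟩) h
  have hS1 : S.coeff 1 = -(1/2) := by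
    rw [hS, Polynomial.finset_sum_coeff]
    rw [Finset.sum_eq_single 2]
    · simp [ha]
      norm_num
    · intro k hk hk1
      simp only [Polynomial.coeff_C_mul, Polynomial.coeff_X_pow]
      rw [if_neg (by simp only [Finset.mem_Icc] at hk; omega)]
      ring
    · intro h
      exact absurd (Finset.mem_Icc.2 ⟨by omega, by omega⟩) h
  have hLc : ∀ j i : ℕ, (L ^ j).coeff i = if j ≤ i then (S ^ j).coeff (i - j) else 0 := by
    intro j i
    rw [hL, mul_pow, Polynomial.coeff_mul_X_pow']
  have h11 : (L ^ 1).coeff 1 = 1 := by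
    rw [hLc, if_pos le_rfl]
    simpa using hS0
  have h21 : ∀ j, 2 ≤ j → (L ^ j).coeff 1 = 0 := by
    intro j hjj
    rw [hLc, if_neg (by omega)]
  have h12 : (L ^ 1).coeff 2 = -(1/2) := by
    rw [hLc, if_pos (by omega)]
    simpa using hS1
  have h22 : (L ^ 2).coeff 2 = 1 := by
    rw [hLc, if_pos le_rfl]
    have : (S ^ 2).coeff 0 = S.coeff 0 * S.coeff 0 := by
      rw [sq, Polynomial.mul_coeff_zero]
    simp [this, hS0]
  have h32 : ∀ j, 3 ≤ j → (L ^ j).coeff 2 = 0 := by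
    intro j hjj
    rw [hLc, if_neg (by omega)]
  have hc0 : L.coeff 0 = 0 := by
    have := hLc 1 0
    simpa using this
  refine ⟨fun i => ∑ j ∈ Finset.Icc 1 J,
      Polynomial.C ((L ^ j).coeff i / (j.factorial : ℝ)) * (derivative^[j] r), ?_, ?_, ?_⟩
  · -- rs 1 = derivative r
    beta_reduce
    have h11' : L.coeff 1 = 1 := by simpa using h11
    rw [Finset.sum_eq_single 1]
    · simp [h11']
    · intro j hj hj1
      have hj2 : 2 ≤ j := by
        simp only [Finset.mem_Icc] at hj
        omega
      simp [h21 j hj2]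
    · intro h
      exact absurd (Finset.mem_Icc.2 ⟨le_refl 1, by omega⟩) h
  · -- rs 2
    beta_reduce
    have hsub : ({1, 2} : Finset ℕ) ⊆ Finset.Icc 1 J := by
      intro x hx
      simp only [Finset.mem_insert, Finset.mem_singleton] at hx
      rcases hx with h | h <;> (subst h; exact Finset.mem_Icc.2 ⟨by omega, by omega⟩)
    rw [← Finset.sum_subset hsub (fun j hj hj2 => by
      have h3 : 3 ≤ j := by
        simp only [Finset.mem_Icc] at hj
        simp only [Finset.mem_insert, Finset.mem_singleton] at hj2
        omega
      simp [h32 j h3])]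
    rw [Finset.sum_insert (by norm_num), Finset.sum_singleton]
    rw [h12, h22]
    simp only [Nat.factorial_one, Nat.factorial_two, Function.iterate_one]
    rw [show derivative^[2] r = derivative (derivative r) by rfl]
    rw [show (-(1/2) : ℝ)/(1:ℕ) = -(1/2) by norm_num]
    rw [show ((1:ℝ)/(2:ℕ)) = (1/2 : ℝ) by norm_num]
    rw [map_neg Polynomial.C (1/2 : ℝ)]
    ring
  · -- asymptotics
    beta_reduce
    have hLeval : ∀ y : ℝ, L.eval y = ∑ k ∈ Finset.Icc 1 M, a k * y ^ k := by
      have hLdef : L = ∑ k ∈ Finset.Icc 1 M, Polynomial.C (a k) * Polynomial.X ^ k := by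
        rw [hL, hS, Finset.sum_mul]
        refine Finset.sum_congr rfl fun k hk => ?_
        rw [mul_assoc, ← pow_succ]
        congr 2
        simp only [Finset.mem_Icc] at hk
        omega
      intro y
      rw [hLdef, Polynomial.eval_finset_sum]
      simp
    have hδE : (fun n : ℕ => Real.log (1 + 1 / n) - L.eval (1 / (n : ℝ))) =O[atTop]
        fun n : ℕ => 1 / (n : ℝ) ^ (M + 1) := by
      refine (log_expansion M).congr' ?_ EventuallyEq.rfl
      filter_upwards with n
      rw [hLeval]
    have hterm : ∀ j ∈ Finset.Icc 1 J, (fun n : ℕ =>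
        ((Polynomial.C ((1 : ℝ) / (j.factorial : ℝ)) * derivative^[j] r).eval (Real.log n)) *
          ((Real.log (1 + 1 / n)) ^ j -
            ∑ i ∈ Finset.Icc 1 K, (L ^ j).coeff i * (1 / (n : ℝ)) ^ i))
          =o[atTop] fun n : ℕ => 1 / (n : ℝ) ^ K := fun j hj =>
      term_est _ L K M j hMK (Finset.mem_Icc.1 hj).1 hc0 hδE
    refine (IsLittleO.fun_sum hterm).congr' ?_ EventuallyEq.rfl
    filter_upwards [eventually_ge_atTop 1] with n hn
    have hn0 : (n : ℝ) ≠ 0 := Nat.cast_ne_zero.2 (by omega)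
    have hnpos : (0 : ℝ) < n := by
      have : (1 : ℝ) ≤ (n : ℝ) := by exact_mod_cast hn
      linarith
    have hlog : Real.log ((n : ℝ) + 1) = Real.log n + Real.log (1 + 1 / n) := by
      rw [← Real.log_mul hn0 (by positivity)]
      congr 1
      field_simp
    have hha : ∀ j : ℕ, (Polynomial.hasseDeriv j r).eval (Real.log n)
        = 1 / (j.factorial : ℝ) * (derivative^[j] r).eval (Real.log n) := by
      intro j
      have h := congrFun (Polynomial.factorial_smul_hasseDeriv (R := ℝ) (k := j)) r
      simp only [LinearMap.smul_apply] at h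
      have h2 := congrArg (Polynomial.eval (Real.log n)) h
      rw [Polynomial.eval_smul, nsmul_eq_mul] at h2
      have hfac : ((j.factorial : ℕ) : ℝ) ≠ 0 := Nat.cast_ne_zero.2 j.factorial_ne_zero
      field_simp
      linarith [h2]
    have htaylor : r.eval (Real.log n + Real.log (1 + 1 / n))
        = ∑ j ∈ Finset.range (J + 1),
            1 / (j.factorial : ℝ) * (derivative^[j] r).eval (Real.log n) *
              (Real.log (1 + 1 / n)) ^ j := by
      have h1 : r.eval (Real.log n + Real.log (1 + 1 / n))
          = (Polynomial.taylor (Real.log n) r).eval (Real.log (1 + 1 / n)) := by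
        rw [Polynomial.taylor_eval, add_comm]
      rw [h1, Polynomial.eval_eq_sum_range' (n := J + 1)
        (by rw [Polynomial.natDegree_taylor]; omega)]
      refine Finset.sum_congr rfl fun j _ => ?_
      rw [Polynomial.taylor_coeff, hha]
    simp only [Polynomial.eval_mul, Polynomial.eval_C]
    rw [hlog, htaylor, Finset.sum_range_succ']
    have hf0 : 1 / (((0:ℕ).factorial : ℝ)) * (derivative^[0] r).eval (Real.log n) *
        (Real.log (1 + 1 / n)) ^ 0 = r.eval (Real.log n) := by
      simp
    rw [hf0]
    have hIcc : ∀ g : ℕ → ℝ, ∑ j ∈ Finset.Icc 1 J, g j = ∑ i ∈ Finset.range J, g (i + 1) := by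
      intro g
      rw [← Finset.Ico_add_one_right_eq_Icc, Finset.sum_Ico_eq_sum_range]
      exact Finset.sum_congr (congrArg Finset.range (by omega)) fun i _ => by rw [Nat.add_comm]
    have hLHS : ∑ j ∈ Finset.Icc 1 J, 1 / (j.factorial : ℝ) *
          (derivative^[j] r).eval (Real.log n) *
          ((Real.log (1 + 1 / n)) ^ j -
            ∑ i ∈ Finset.Icc 1 K, (L ^ j).coeff i * (1 / (n : ℝ)) ^ i)
        = (∑ j ∈ Finset.Icc 1 J, 1 / (j.factorial : ℝ) *
            (derivative^[j] r).eval (Real.log n) * (Real.log (1 + 1 / n)) ^ j)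
          - ∑ j ∈ Finset.Icc 1 J, ∑ i ∈ Finset.Icc 1 K,
              ((L ^ j).coeff i / (j.factorial : ℝ)) *
                (derivative^[j] r).eval (Real.log n) * (1 / (n : ℝ)) ^ i := by
      rw [← Finset.sum_sub_distrib]
      refine Finset.sum_congr rfl fun j _ => ?_
      rw [mul_sub, Finset.mul_sum]
      congr 1
      refine Finset.sum_congr rfl fun i _ => ?_
      ring
    have hswap : ∑ j ∈ Finset.Icc 1 J, ∑ i ∈ Finset.Icc 1 K,
          ((L ^ j).coeff i / (j.factorial : ℝ)) *
            (derivative^[j] r).eval (Real.log n) * (1 / (n : ℝ)) ^ i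
        = ∑ i ∈ Finset.Icc 1 K, (∑ j ∈ Finset.Icc 1 J,
            Polynomial.C ((L ^ j).coeff i / (j.factorial : ℝ)) *
              (derivative^[j] r)).eval (Real.log n) / (n : ℝ) ^ i := by
      rw [Finset.sum_comm]
      refine Finset.sum_congr rfl fun i _ => ?_
      rw [Polynomial.eval_finset_sum, Finset.sum_div]
      refine Finset.sum_congr rfl fun j _ => ?_
      rw [Polynomial.eval_mul, Polynomial.eval_C]
      ring
    rw [hLHS, hswap, hIcc (fun j => 1 / (j.factorial : ℝ) *
      (derivative^[j] r).eval (Real.log n) * (Real.log (1 + 1 / n)) ^ j)]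
    ring
end

section
/- Let r : ℝ → ℝ be a polynomial. Then for every positive integer K there exist rational functions r̃_1, ..., r̃_K such that r(log(n-1)) - r(log n) = Σ_{i=1}^K r̃_i(log n)/n^i + o(1/n^K) as n → ∞, with r̃_1(x) = -r'(x) and r̃_2(x) = (r''(x) - r'(x))/2. -/
open Real Filter Asymptotics Polynomial Topology

set_option maxHeartbeats 1000000

private lemma sum_shift {M : Type*} [AddCommMonoid M] (J : ℕ) (g : ℕ → M) :
    ∑ i ∈ Finset.range J, g (i + 1) = ∑ j ∈ Finset.Icc 1 J, g j := by
  rw [← Finset.Ico_add_one_right_eq_Icc, Finset.sum_Ico_eq_sum_range]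
  exact Finset.sum_congr (by norm_num) fun i _ => by rw [Nat.add_comm]

private lemma polyLog_littleO (p : Polynomial ℝ) :
    (fun n : ℕ => p.eval (Real.log n)) =o[atTop] (fun n : ℕ => (n : ℝ)) := by
  have h : (fun x : ℝ => p.eval (Real.log x)) =o[atTop] (fun x : ℝ => x) := by
    have h2 : ∀ x : ℝ, p.eval (Real.log x)
        = ∑ i ∈ Finset.range (p.natDegree + 1), p.coeff i * (Real.log x) ^ i :=
      fun x => eval_eq_sum_range _
    simp only [h2]
    apply IsLittleO.fun_sum
    intro i _
    exact (Real.isLittleO_pow_log_id_atTop (n := i)).const_mul_left (p.coeff i)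
  exact h.comp_tendsto tendsto_natCast_atTop_atTop

private lemma pow_bigO {i m : ℕ} (h : m ≤ i) :
    (fun n : ℕ => 1 / (n : ℝ) ^ i) =O[atTop] fun n : ℕ => 1 / (n : ℝ) ^ m := by
  rw [isBigO_iff]
  refine ⟨1, ?_⟩
  filter_upwards [eventually_ge_atTop 1] with n hn
  have hn1 : (1 : ℝ) ≤ (n : ℝ) := by exact_mod_cast hn
  have hn0 : (0 : ℝ) < (n : ℝ) := by linarith
  simp only [Real.norm_eq_abs]
  rw [one_mul, abs_of_nonneg (by positivity), abs_of_nonneg (by positivity)]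
  apply one_div_le_one_div_of_le (by positivity)
  exact pow_le_pow_right₀ hn1 h

private lemma log_taylor_bound (M : ℕ) :
    (fun n : ℕ => Real.log (1 - (n : ℝ)⁻¹)
        + ∑ i ∈ Finset.range M, ((n : ℝ)⁻¹) ^ (i + 1) / (i + 1))
      =O[atTop] fun n : ℕ => 1 / (n : ℝ) ^ (M + 1) := by
  rw [isBigO_iff]
  refine ⟨2, ?_⟩
  filter_upwards [eventually_ge_atTop 2] with n hn
  simp only [Real.norm_eq_abs]
  have hn2 : (2 : ℝ) ≤ (n : ℝ) := by exact_mod_cast hn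
  have hx0 : (0 : ℝ) < (n : ℝ)⁻¹ := by positivity
  have hx : (n : ℝ)⁻¹ ≤ 1 / 2 := by
    rw [inv_eq_one_div]
    apply one_div_le_one_div_of_le <;> linarith
  have habs : |(n : ℝ)⁻¹| < 1 := by rw [abs_of_pos hx0]; linarith
  have hb := Real.abs_log_sub_add_sum_range_le habs M
  rw [abs_of_pos hx0] at hb
  have h1 : |Real.log (1 - (n : ℝ)⁻¹)
      + ∑ i ∈ Finset.range M, ((n : ℝ)⁻¹) ^ (i + 1) / (i + 1)|
      ≤ (n : ℝ)⁻¹ ^ (M + 1) / (1 - (n : ℝ)⁻¹) := by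
    rw [add_comm]; exact hb
  have h2 : (n : ℝ)⁻¹ ^ (M + 1) / (1 - (n : ℝ)⁻¹) ≤ 2 * (1 / (n : ℝ) ^ (M + 1)) := by
    rw [div_le_iff₀ (by linarith)]
    have : (n : ℝ)⁻¹ ^ (M + 1) = 1 / (n : ℝ) ^ (M + 1) := by
      rw [inv_pow, inv_eq_one_div]
    rw [this]
    have hpos : (0 : ℝ) < 1 / (n : ℝ) ^ (M + 1) := by positivity
    nlinarith
  calc |Real.log (1 - (n : ℝ)⁻¹)
      + ∑ i ∈ Finset.range M, ((n : ℝ)⁻¹) ^ (i + 1) / (i + 1)|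
      ≤ (n : ℝ)⁻¹ ^ (M + 1) / (1 - (n : ℝ)⁻¹) := h1
    _ ≤ 2 * (1 / (n : ℝ) ^ (M + 1)) := h2
    _ ≤ 2 * |1 / (n : ℝ) ^ (M + 1)| := by
        gcongr; exact le_abs_self _

theorem stmt12 (r : Polynomial ℝ) (K : ℕ) (hK : 1 ≤ K) :
    ∃ rs : ℕ → Polynomial ℝ,
      rs 1 = -derivative r ∧
      rs 2 = Polynomial.C (1 / 2 : ℝ) * (derivative (derivative r) - derivative r) ∧
      (fun n : ℕ => r.eval (Real.log ((n : ℝ) - 1)) - r.eval (Real.log n)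
          - ∑ i ∈ Finset.Icc 1 K, (rs i).eval (Real.log n) / (n : ℝ) ^ i)
        =o[atTop] fun n : ℕ => 1 / (n : ℝ) ^ K := by
  classical
  set D := r.natDegree with hD
  set J := D + 2 with hJ
  set K' := max K 2 with hK'
  have hK'2 : 2 ≤ K' := le_max_right _ _
  have hKK' : K ≤ K' := le_max_left _ _
  set L : Polynomial ℝ :=
    -∑ k ∈ Finset.range K', Polynomial.C (1 / (k + 1) : ℝ) * Polynomial.X ^ (k + 1) with hLdef
  have hLc : ∀ m : ℕ, L.coeff m
      = -∑ k ∈ Finset.range K', (1 / (k + 1) : ℝ) * (if m = k + 1 then 1 else 0) := by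
    intro m
    simp [hLdef, Polynomial.finset_sum_coeff, Polynomial.coeff_C_mul, Polynomial.coeff_X_pow]
  have hL0 : L.coeff 0 = 0 := by rw [hLc]; simp
  have hL1 : L.coeff 1 = -1 := by
    rw [hLc, Finset.sum_eq_single_of_mem 0 (Finset.mem_range.mpr (by omega))]
    · norm_num
    · intro k _ hk
      have : (1 : ℕ) ≠ k + 1 := by omega
      simp [this, hk]
  have hL2 : L.coeff 2 = -(1 / 2) := by
    rw [hLc, Finset.sum_eq_single_of_mem 1 (Finset.mem_range.mpr (by omega))]
    · norm_num
    · intro k _ hk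
      have : (2 : ℕ) ≠ k + 1 := by omega
      simp [this]
  obtain ⟨q, hq⟩ : (Polynomial.X : Polynomial ℝ) ∣ L := Polynomial.X_dvd_iff.mpr hL0
  have hvanish : ∀ j i : ℕ, i < j → (L ^ j).coeff i = 0 := by
    intro j i hij
    have hLj : L ^ j = q ^ j * Polynomial.X ^ j := by rw [hq]; ring
    rw [hLj, Polynomial.coeff_mul_X_pow']
    simp [Nat.not_le.mpr hij]
  have hc22 : (L ^ 2).coeff 2 = 1 := by
    rw [pow_two, Polynomial.coeff_mul, Finset.Nat.sum_antidiagonal_eq_sum_range_succ_mk]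
    rw [Finset.sum_range_succ, Finset.sum_range_succ, Finset.sum_range_succ,
      Finset.sum_range_zero]
    norm_num [hL0, hL1, hL2]
  have hhd2 : Polynomial.hasseDeriv 2 r
      = Polynomial.C (1 / 2 : ℝ) * Polynomial.derivative (Polynomial.derivative r) := by
    have hfac := congrFun (Polynomial.factorial_smul_hasseDeriv (R := ℝ) (k := 2)) r
    simp only [LinearMap.smul_apply, Nat.factorial] at hfac
    have h2 : (2 : ℕ) • Polynomial.hasseDeriv 2 r
        = Polynomial.derivative (Polynomial.derivative r) := by
      simpa [Function.iterate_succ, Function.comp] using hfac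
    have h3 : (Polynomial.C (2 : ℝ)) * Polynomial.hasseDeriv 2 r
        = Polynomial.derivative (Polynomial.derivative r) := by
      rw [← h2, nsmul_eq_mul]
      norm_num
      exact Or.inl (map_ofNat Polynomial.C 2)
    rw [← h3, ← mul_assoc, ← Polynomial.C_mul]
    norm_num
  refine ⟨fun i => ∑ j ∈ Finset.Icc 1 J,
      Polynomial.C ((L ^ j).coeff i) * Polynomial.hasseDeriv j r, ?_, ?_, ?_⟩
  · dsimp only
    rw [Finset.sum_eq_single_of_mem 1 (Finset.mem_Icc.mpr ⟨le_refl 1, by omega⟩)]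
    · rw [pow_one, hL1, Polynomial.hasseDeriv_one]
      simp
    · intro j hj hj1
      have h1j : (1 : ℕ) < j := by
        rcases Finset.mem_Icc.mp hj with ⟨h1, _⟩; omega
      rw [hvanish j 1 h1j]; simp
  · dsimp only
    have hsub : ({1, 2} : Finset ℕ) ⊆ Finset.Icc 1 J := by
      intro x hx
      simp only [Finset.mem_insert, Finset.mem_singleton] at hx
      rcases hx with h | h <;> simp [Finset.mem_Icc, h] <;> omega
    rw [← Finset.sum_subset hsub (by
      intro j hj hj2
      simp only [Finset.mem_insert, Finset.mem_singleton, not_or] at hj2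
      have h2j : (2 : ℕ) < j := by
        rcases Finset.mem_Icc.mp hj with ⟨h1, _⟩; omega
      rw [hvanish j 2 h2j]; simp)]
    rw [Finset.sum_pair (by norm_num : (1 : ℕ) ≠ 2)]
    rw [pow_one, hL2, hc22, Polynomial.hasseDeriv_one, hhd2]
    rw [map_neg, map_one]
    ring
  · dsimp only
    set t : ℕ → ℝ := fun n => Real.log (1 - (n : ℝ)⁻¹) with htdef
    set l : ℕ → ℝ := fun n => L.eval ((n : ℝ)⁻¹) with hldef
    have htaylor : ∀ x u : ℝ, r.eval (x + u)
        = ∑ j ∈ Finset.range (J + 1), (Polynomial.hasseDeriv j r).eval x * u ^ j := by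
      intro x u
      have h1 : r.eval (x + u) = (Polynomial.taylor x r).eval u := by
        rw [Polynomial.taylor_eval, add_comm]
      rw [h1, Polynomial.eval_eq_sum_range' (n := J + 1)
        (by rw [Polynomial.natDegree_taylor]; omega) u]
      exact Finset.sum_congr rfl fun j _ => by rw [Polynomial.taylor_coeff]
    have hmain : (fun n : ℕ =>
        r.eval (Real.log ((n : ℝ) - 1)) - r.eval (Real.log n)
          - ∑ i ∈ Finset.Icc 1 K,
              (∑ j ∈ Finset.Icc 1 J, Polynomial.C ((L ^ j).coeff i)
                * Polynomial.hasseDeriv j r).eval (Real.log n) / (n : ℝ) ^ i)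
        =ᶠ[atTop] (fun n : ℕ =>
          ∑ j ∈ Finset.Icc 1 J, (Polynomial.hasseDeriv j r).eval (Real.log n)
            * (t n ^ j - ∑ i ∈ Finset.Icc 1 K, (L ^ j).coeff i * ((n : ℝ)⁻¹) ^ i)) := by
      filter_upwards [eventually_ge_atTop 2] with n hn
      have hn2 : (2 : ℝ) ≤ (n : ℝ) := by exact_mod_cast hn
      have hn0 : (0 : ℝ) < (n : ℝ) := by linarith
      have hnne : (n : ℝ) ≠ 0 := ne_of_gt hn0
      have hinv : (n : ℝ)⁻¹ ≤ 1 / 2 := by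
        rw [inv_eq_one_div]
        apply one_div_le_one_div_of_le <;> linarith
      have hfac : (1 : ℝ) - (n : ℝ)⁻¹ ≠ 0 := by
        have h0 : (0 : ℝ) < (n : ℝ)⁻¹ := by positivity
        have : (0 : ℝ) < 1 - (n : ℝ)⁻¹ := by linarith
        exact ne_of_gt this
      have hsplit : Real.log ((n : ℝ) - 1) = Real.log n + t n := by
        have he : (n : ℝ) - 1 = n * (1 - (n : ℝ)⁻¹) := by field_simp
        rw [he, Real.log_mul hnne hfac]
      rw [hsplit, htaylor (Real.log n) (t n), Finset.sum_range_succ']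
      rw [sum_shift J (fun j => (Polynomial.hasseDeriv j r).eval (Real.log n) * t n ^ j)]
      have hzeroterm : (Polynomial.hasseDeriv 0 r).eval (Real.log n) * t n ^ 0
          = r.eval (Real.log n) := by
        simp [Polynomial.hasseDeriv_zero']
      rw [hzeroterm]
      have hswap : ∑ i ∈ Finset.Icc 1 K,
          (∑ j ∈ Finset.Icc 1 J, Polynomial.C ((L ^ j).coeff i)
            * Polynomial.hasseDeriv j r).eval (Real.log n) / (n : ℝ) ^ i
          = ∑ j ∈ Finset.Icc 1 J, (Polynomial.hasseDeriv j r).eval (Real.log n)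
              * ∑ i ∈ Finset.Icc 1 K, (L ^ j).coeff i * ((n : ℝ)⁻¹) ^ i := by
        simp only [Polynomial.eval_finset_sum, Polynomial.eval_mul, Polynomial.eval_C,
          Finset.sum_div]
        rw [Finset.sum_comm]
        refine Finset.sum_congr rfl fun j _ => ?_
        rw [Finset.mul_sum]
        refine Finset.sum_congr rfl fun i _ => ?_
        rw [div_eq_mul_inv, inv_pow]
        ring
      rw [hswap]
      simp only [mul_sub]
      rw [Finset.sum_sub_distrib]
      ring
    have hleval : ∀ m : ℕ, l m = -∑ i ∈ Finset.range K', ((m : ℝ)⁻¹) ^ (i + 1) / (i + 1) := by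
      intro m
      simp only [hldef, hLdef, Polynomial.eval_neg, Polynomial.eval_finset_sum,
        Polynomial.eval_mul, Polynomial.eval_C, Polynomial.eval_pow, Polynomial.eval_X]
      congr 1
      exact Finset.sum_congr rfl fun i _ => by ring
    have hepsK' : (fun n : ℕ => t n - l n) =O[atTop] fun n : ℕ => 1 / (n : ℝ) ^ (K' + 1) := by
      have h := log_taylor_bound K'
      refine h.congr_left fun n => ?_
      rw [hleval n]
      simp only [htdef]
      ring
    have heps : (fun n : ℕ => t n - l n) =O[atTop] fun n : ℕ => 1 / (n : ℝ) ^ (K + 1) :=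
      hepsK'.trans (pow_bigO (by omega))
    have hone : ∀ m : ℕ, (fun n : ℕ => 1 / (n : ℝ) ^ m) =O[atTop] (fun _ : ℕ => (1 : ℝ)) := by
      intro m
      have h := pow_bigO (i := m) (m := 0) (Nat.zero_le m)
      simpa using h
    have hlO : l =O[atTop] (fun _ : ℕ => (1 : ℝ)) := by
      have hc : Continuous fun x : ℝ => L.eval x := L.continuous
      have h0 : Tendsto (fun n : ℕ => ((n : ℝ))⁻¹) atTop (𝓝 0) :=
        tendsto_inv_atTop_zero.comp tendsto_natCast_atTop_atTop
      exact ((hc.tendsto 0).comp h0).isBigO_one ℝ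
    have htO : t =O[atTop] (fun _ : ℕ => (1 : ℝ)) := by
      have h1 := (heps.trans (hone (K + 1))).add hlO
      refine h1.congr_left fun n => ?_
      ring
    have hpowdiff : ∀ j : ℕ, 1 ≤ j →
        (fun n : ℕ => t n ^ j - l n ^ j) =O[atTop] fun n : ℕ => 1 / (n : ℝ) ^ (K + 1) := by
      intro j hj
      induction j with
      | zero => omega
      | succ j ih =>
        rcases Nat.eq_or_lt_of_le hj with h1 | h1
        · have hj0 : j = 0 := by omega
          subst hj0
          simpa [pow_one] using heps
        · have hj' : 1 ≤ j := by omega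
          have ihj := ih hj'
          have hterm1 : (fun n : ℕ => t n * (t n ^ j - l n ^ j))
              =O[atTop] fun n : ℕ => 1 / (n : ℝ) ^ (K + 1) := by
            have h := htO.mul ihj
            simpa using h
          have hlpow : (fun n : ℕ => l n ^ j) =O[atTop] (fun _ : ℕ => (1 : ℝ)) := by
            have h := hlO.pow j
            simpa using h
          have hterm2 : (fun n : ℕ => (t n - l n) * l n ^ j)
              =O[atTop] fun n : ℕ => 1 / (n : ℝ) ^ (K + 1) := by
            have h := heps.mul hlpow
            simpa using h
          refine (hterm1.add hterm2).congr_left fun n => ?_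
          ring
    have htail : ∀ j : ℕ, 1 ≤ j →
        (fun n : ℕ => l n ^ j - ∑ i ∈ Finset.Icc 1 K, (L ^ j).coeff i * ((n : ℝ)⁻¹) ^ i)
          =O[atTop] fun n : ℕ => 1 / (n : ℝ) ^ (K + 1) := by
      intro j hj
      set N := (L ^ j).natDegree with hN
      have hident : ∀ x : ℝ, (L ^ j).eval x - ∑ i ∈ Finset.Icc 1 K, (L ^ j).coeff i * x ^ i
          = ∑ i ∈ Finset.Ico (K + 1) (N + K + 2), (L ^ j).coeff i * x ^ i := by
        intro x
        have h1 : (L ^ j).eval x = ∑ i ∈ Finset.range (N + K + 2), (L ^ j).coeff i * x ^ i :=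
          Polynomial.eval_eq_sum_range' (by omega) x
        have h2 : ∑ i ∈ Finset.Icc 1 K, (L ^ j).coeff i * x ^ i
            = ∑ i ∈ Finset.range (K + 1), (L ^ j).coeff i * x ^ i := by
          rw [Finset.sum_range_succ' (fun i => (L ^ j).coeff i * x ^ i) K]
          rw [sum_shift K (fun i => (L ^ j).coeff i * x ^ i)]
          rw [hvanish j 0 (by omega)]
          ring
        have h3 : K + 1 ≤ N + K + 2 := by omega
        rw [h1, h2]
        simp only [Finset.range_eq_Ico]
        rw [← Finset.sum_Ico_consecutive (fun i => (L ^ j).coeff i * x ^ i)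
          (Nat.zero_le (K + 1)) h3]
        ring
      have hfun : ∀ n : ℕ,
          l n ^ j - ∑ i ∈ Finset.Icc 1 K, (L ^ j).coeff i * ((n : ℝ)⁻¹) ^ i
          = ∑ i ∈ Finset.Ico (K + 1) (N + K + 2), (L ^ j).coeff i * ((n : ℝ)⁻¹) ^ i := by
        intro n
        have hl : l n ^ j = (L ^ j).eval ((n : ℝ)⁻¹) := by
          rw [hldef, Polynomial.eval_pow]
        rw [hl]
        exact hident _
      have hterm : ∀ i ∈ Finset.Ico (K + 1) (N + K + 2),
          (fun n : ℕ => (L ^ j).coeff i * ((n : ℝ)⁻¹) ^ i)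
            =O[atTop] fun n : ℕ => 1 / (n : ℝ) ^ (K + 1) := by
        intro i hi
        have hKi : K + 1 ≤ i := (Finset.mem_Ico.mp hi).1
        have h := (pow_bigO hKi).const_mul_left ((L ^ j).coeff i)
        refine h.congr_left fun n => ?_
        rw [inv_pow, one_div]
      exact (IsBigO.fun_sum hterm).congr_left fun n => (hfun n).symm
    have hterms : ∀ j ∈ Finset.Icc 1 J,
        (fun n : ℕ => (Polynomial.hasseDeriv j r).eval (Real.log n)
          * (t n ^ j - ∑ i ∈ Finset.Icc 1 K, (L ^ j).coeff i * ((n : ℝ)⁻¹) ^ i))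
        =o[atTop] fun n : ℕ => 1 / (n : ℝ) ^ K := by
      intro j hj
      have hj1 : 1 ≤ j := (Finset.mem_Icc.mp hj).1
      have hbig : (fun n : ℕ =>
          t n ^ j - ∑ i ∈ Finset.Icc 1 K, (L ^ j).coeff i * ((n : ℝ)⁻¹) ^ i)
          =O[atTop] fun n : ℕ => 1 / (n : ℝ) ^ (K + 1) := by
        refine ((hpowdiff j hj1).add (htail j hj1)).congr_left fun n => ?_
        ring
      have hlit := (polyLog_littleO (Polynomial.hasseDeriv j r)).mul_isBigO hbig
      refine hlit.congr' (EventuallyEq.refl _ _) ?_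
      filter_upwards [eventually_ge_atTop 1] with n hn
      have hn0 : (0 : ℝ) < (n : ℝ) := by
        have : (1 : ℝ) ≤ (n : ℝ) := by exact_mod_cast hn
        linarith
      field_simp
      ring
    exact (IsLittleO.fun_sum hterms).congr' hmain.symm (EventuallyEq.refl _ _)
end

section
/- Let a_n = r(log n)/n^α where r is a rational function positive for large arguments and α > 0. Then u_n = a_{n-1}a_{n+1}/a_n^2 satisfies u_n = 1 + r_2(log n)/n^2 + O((log n)^C/n^3) for some constant C, where r_2(x) = α + (log r(x))'' - (log r(x))'. -/
open Real Filter Asymptotics Polynomial Set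

lemma logb13 {x : ℝ} (h : |x| ≤ 1/2) : |Real.log (1-x) + x| ≤ 2 * x^2 := by
  have h1 : |x| < 1 := lt_of_le_of_lt h (by norm_num)
  have := Real.abs_log_sub_add_sum_range_le h1 1
  simp [Finset.sum_range_one] at this
  have h2 : x ^ 2 / (1 - |x|) ≤ 2 * x ^ 2 := by
    rw [div_le_iff₀ (by linarith)]
    nlinarith [sq_nonneg x, abs_nonneg x]
  calc |Real.log (1-x) + x| = |x + Real.log (1-x)| := by rw [add_comm]
    _ ≤ x ^ 2 / (1 - |x|) := this
    _ ≤ 2 * x ^ 2 := h2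

lemma ratio_tendsto1 (p : ℝ[X]) (hp : p ≠ 0) :
    Tendsto (fun x => eval x (derivative p) / eval x p) atTop (nhds 0) :=
  div_tendsto_zero_of_degree_lt _ _ (degree_derivative_lt hp)

lemma ratio_tendsto2 (p : ℝ[X]) (hp : p ≠ 0) :
    Tendsto (fun x => eval x (derivative (derivative p)) / eval x p) atTop (nhds 0) := by
  by_cases h : derivative p = 0
  · simp only [h]
    simpa using tendsto_const_nhds (α := ℝ) (f := atTop) (a := (0:ℝ))
  · exact div_tendsto_zero_of_degree_lt _ _ ((degree_derivative_lt h).trans (degree_derivative_lt hp))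

lemma ratio_tendsto3 (p : ℝ[X]) (hp : p ≠ 0) :
    Tendsto (fun x => eval x (derivative (derivative (derivative p))) / eval x p) atTop (nhds 0) := by
  by_cases h2 : derivative (derivative p) = 0
  · simp only [h2]
    simpa using tendsto_const_nhds (α := ℝ) (f := atTop) (a := (0:ℝ))
  · have h1 : derivative p ≠ 0 := fun hh => h2 (by simp [hh])
    exact div_tendsto_zero_of_degree_lt _ _
      (((degree_derivative_lt h2).trans (degree_derivative_lt h1)).trans (degree_derivative_lt hp))

lemma taylor_bound13 {f f1 f2 f3 : ℝ → ℝ} {a b M : ℝ} (hab : a ≤ b)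
    (h1 : ∀ x ∈ Icc a b, HasDerivAt f (f1 x) x)
    (h2 : ∀ x ∈ Icc a b, HasDerivAt f1 (f2 x) x)
    (h3 : ∀ x ∈ Icc a b, HasDerivAt f2 (f3 x) x)
    (hM : ∀ x ∈ Icc a b, |f3 x| ≤ M) :
    |f b - f a - f1 a * (b - a) - f2 a * (b - a)^2 / 2| ≤ M * (b - a)^3 / 6 := by
  have hM0 : 0 ≤ M := le_trans (abs_nonneg _) (hM a ⟨le_refl a, hab⟩)
  -- step 1 : |f2 x - f2 a| ≤ M * (x - a) on Icc
  have step1 : ∀ x ∈ Icc a b, |f2 x - f2 a| ≤ M * (x - a) := by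
    intro x hx
    have := Convex.norm_image_sub_le_of_norm_hasDerivWithin_le
      (f := f2) (f' := f3) (s := Icc a b) (C := M)
      (fun y hy => (h3 y hy).hasDerivWithinAt)
      (fun y hy => by simpa using hM y hy) (convex_Icc a b) ⟨le_refl a, hab⟩ hx
    simpa [Real.norm_eq_abs, abs_of_nonneg (sub_nonneg.2 hx.1)] using this
  -- step 2 : |g x| ≤ M * (x-a)^2/2 where g x = f1 x - f1 a - f2 a * (x - a)
  set g : ℝ → ℝ := fun x => f1 x - f1 a - f2 a * (x - a) with hg
  have hg' : ∀ x ∈ Icc a b, HasDerivAt g (f2 x - f2 a) x := by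
    intro x hx
    have : HasDerivAt g (f2 x - 0 - f2 a * 1) x :=
      ((h2 x hx).sub (hasDerivAt_const x (f1 a))).sub
        (((hasDerivAt_id x).sub_const a).const_mul (f2 a))
    simpa using this
  have step2 : ∀ x ∈ Icc a b, |g x| ≤ M * (x - a)^2 / 2 := by
    intro x hx
    have hB : ∀ y : ℝ, HasDerivAt (fun t => M * (t - a)^2 / 2) (M * (y - a)) y := by
      intro y
      have : HasDerivAt (fun t => M * (t - a)^2 / 2)
          (M * ((2 : ℕ) * (y - a) ^ (2 - 1) * 1) / 2) y :=
        ((((hasDerivAt_id y).sub_const a).pow 2).const_mul M).div_const 2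
      convert this using 1; push_cast; ring
    have := image_norm_le_of_norm_deriv_right_le_deriv_boundary
      (f := g) (f' := fun x => f2 x - f2 a) (a := a) (b := b)
      (fun y hy => ((hg' y hy).continuousAt).continuousWithinAt)
      (fun y hy => (hg' y ⟨hy.1, hy.2.le⟩).hasDerivWithinAt.mono (by intro t ht; exact ht))
      (B := fun t => M * (t - a)^2 / 2) (B' := fun t => M * (t - a))
      (by simp [hg]) hB
      (fun y hy => by
        simpa [Real.norm_eq_abs] using step1 y ⟨hy.1, hy.2.le⟩) hx
    simpa [Real.norm_eq_abs] using this
  -- step 3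
  set h : ℝ → ℝ := fun x => f x - f a - f1 a * (x - a) - f2 a * (x - a)^2 / 2 with hh
  have hh' : ∀ x ∈ Icc a b, HasDerivAt h (g x) x := by
    intro x hx
    have : HasDerivAt h (f1 x - 0 - f1 a * 1 - f2 a * ((2:ℕ) * (x - a)^(2-1) * 1) / 2) x :=
      (((h1 x hx).sub (hasDerivAt_const x (f a))).sub
        (((hasDerivAt_id x).sub_const a).const_mul (f1 a))).sub
        (((((hasDerivAt_id x).sub_const a).pow 2).const_mul (f2 a)).div_const 2)
    convert this using 1; simp [hg]; push_cast; ring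
  have hB : ∀ y : ℝ, HasDerivAt (fun t => M * (t - a)^3 / 6) (M * (y - a)^2 / 2) y := by
    intro y
    have : HasDerivAt (fun t => M * (t - a)^3 / 6)
        (M * ((3 : ℕ) * (y - a) ^ (3 - 1) * 1) / 6) y :=
      ((((hasDerivAt_id y).sub_const a).pow 3).const_mul M).div_const 6
    convert this using 1; push_cast; ring
  have step3 := image_norm_le_of_norm_deriv_right_le_deriv_boundary
    (f := h) (f' := g) (a := a) (b := b)
    (fun y hy => ((hh' y hy).continuousAt).continuousWithinAt)
    (fun y hy => (hh' y ⟨hy.1, hy.2.le⟩).hasDerivWithinAt.mono (by intro t ht; exact ht))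
    (B := fun t => M * (t - a)^3 / 6) (B' := fun t => M * (t - a)^2 / 2)
    (by simp [hh]) hB
    (fun y hy => by simpa [Real.norm_eq_abs] using step2 y ⟨hy.1, hy.2.le⟩)
    (x := b) ⟨hab, le_refl b⟩
  simpa [Real.norm_eq_abs, hh] using step3

lemma taylor_bound13_left {f f1 f2 f3 : ℝ → ℝ} {a b M : ℝ} (hab : a ≤ b)
    (h1 : ∀ x ∈ Icc a b, HasDerivAt f (f1 x) x)
    (h2 : ∀ x ∈ Icc a b, HasDerivAt f1 (f2 x) x)
    (h3 : ∀ x ∈ Icc a b, HasDerivAt f2 (f3 x) x)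
    (hM : ∀ x ∈ Icc a b, |f3 x| ≤ M) :
    |f a - f b + f1 b * (b - a) - f2 b * (b - a)^2 / 2| ≤ M * (b - a)^3 / 6 := by
  have hmem : ∀ x : ℝ, x ∈ Icc a b → a + b - x ∈ Icc a b := by
    intro x hx; exact ⟨by linarith [hx.2], by linarith [hx.1]⟩
  have hneg : ∀ x : ℝ, HasDerivAt (fun t : ℝ => a + b - t) (-1 : ℝ) x := by
    intro x
    simpa [Pi.sub_def] using (hasDerivAt_const x (a + b)).sub (hasDerivAt_id x)
  have key := taylor_bound13 (f := fun t => f (a + b - t)) (f1 := fun t => -f1 (a + b - t))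
    (f2 := fun t => f2 (a + b - t)) (f3 := fun t => -f3 (a + b - t)) (M := M) hab
    (fun x hx => by
      have := ((h1 _ (hmem x hx)).comp x (hneg x)); simpa [Function.comp_def] using this)
    (fun x hx => by
      have := ((h2 _ (hmem x hx)).comp x (hneg x)).neg; simpa [Function.comp_def, Pi.neg_def] using this)
    (fun x hx => by
      have := ((h3 _ (hmem x hx)).comp x (hneg x)); simpa [Function.comp_def] using this)
    (fun x hx => by simpa using hM _ (hmem x hx))
  simp only [show a + b - b = a by ring, show a + b - a = b by ring] at key
  calc |f a - f b + f1 b * (b - a) - f2 b * (b - a)^2 / 2|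
      = |f a - f b - (-f1 b) * (b - a) - f2 b * (b - a)^2 / 2| := by ring_nf
    _ ≤ M * (b - a)^3 / 6 := key

lemma hasDerivAt_c1 (p : ℝ[X]) {x : ℝ} (hx : eval x p ≠ 0) :
    HasDerivAt (fun y => eval y (derivative p) / eval y p)
      (eval x (derivative (derivative p)) / eval x p
        - (eval x (derivative p) / eval x p)^2) x := by
  have h := ((derivative p).hasDerivAt x).div (p.hasDerivAt x) hx
  refine h.congr_deriv ?_
  field_simp

lemma hasDerivAt_c2 (p : ℝ[X]) {x : ℝ} (hx : eval x p ≠ 0) :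
    HasDerivAt (fun y => eval y (derivative (derivative p)) / eval y p
        - (eval y (derivative p) / eval y p)^2)
      (eval x (derivative (derivative (derivative p))) / eval x p
        - 3 * (eval x (derivative (derivative p)) / eval x p)
            * (eval x (derivative p) / eval x p)
        + 2 * (eval x (derivative p) / eval x p)^3) x := by
  have h1 := ((derivative (derivative p)).hasDerivAt x).div (p.hasDerivAt x) hx
  have h2 := (hasDerivAt_c1 p hx).pow 2
  have h := h1.sub h2
  refine h.congr_deriv ?_
  norm_num
  field_simp
  ring

lemma tendsto_c2 (p : ℝ[X]) (hp : p ≠ 0) :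
    Tendsto (fun x => eval x (derivative (derivative p)) / eval x p
      - (eval x (derivative p) / eval x p)^2) atTop (nhds 0) := by
  have h := (ratio_tendsto2 p hp).sub ((ratio_tendsto1 p hp).pow 2)
  simpa using h

lemma tendsto_c3 (p : ℝ[X]) (hp : p ≠ 0) :
    Tendsto (fun x => eval x (derivative (derivative (derivative p))) / eval x p
      - 3 * (eval x (derivative (derivative p)) / eval x p)
          * (eval x (derivative p) / eval x p)
      + 2 * (eval x (derivative p) / eval x p)^3) atTop (nhds 0) := by
  have h := ((ratio_tendsto3 p hp).sub
      (((ratio_tendsto2 p hp).mul (ratio_tendsto1 p hp)).const_mul 3)).add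
      (((ratio_tendsto1 p hp).pow 3).const_mul 2)
  have h2 : Tendsto (fun x => eval x (derivative (derivative (derivative p))) / eval x p
      - 3 * (eval x (derivative (derivative p)) / eval x p)
          * (eval x (derivative p) / eval x p)
      + 2 * (eval x (derivative p) / eval x p)^3) atTop
      (nhds (0 - 3 * (0 * 0) + 2 * 0 ^ 3)) := h.congr (fun x => by ring)
  simpa using h2

lemma hasDerivAt_L (p q : ℝ[X]) (r : ℝ → ℝ) (hr : ∀ x, r x = eval x p / eval x q)
    {x : ℝ} (hpx : eval x p ≠ 0) (hqx : eval x q ≠ 0) :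
    HasDerivAt (fun y => Real.log (r y))
      (eval x (derivative p) / eval x p - eval x (derivative q) / eval x q) x := by
  have hev : (fun y => Real.log (r y)) =ᶠ[nhds x]
      fun y => Real.log (eval y p) - Real.log (eval y q) := by
    filter_upwards [p.continuousAt.eventually_ne hpx, q.continuousAt.eventually_ne hqx]
      with y h1y h2y
    rw [hr y, Real.log_div h1y h2y]
  have hd : HasDerivAt (fun y => Real.log (eval y p) - Real.log (eval y q))
      (1 / eval x p * eval x (derivative p) - 1 / eval x q * eval x (derivative q)) x := by
    have hdp := (Real.hasDerivAt_log hpx).comp x (p.hasDerivAt x)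
    have hdq := (Real.hasDerivAt_log hqx).comp x (q.hasDerivAt x)
    simpa [Function.comp_def, Pi.sub_def] using hdp.sub hdq
  have h := hd.congr_of_eventuallyEq hev
  refine h.congr_deriv ?_
  field_simp

set_option maxHeartbeats 1000000 in
lemma main_est13 {G G1 R2 R3 : ℝ → ℝ} {X B1 : ℝ} (hB1 : 0 ≤ B1)
    (hG : ∀ x, X ≤ x → HasDerivAt G (G1 x) x)
    (hG1 : ∀ x, X ≤ x → HasDerivAt G1 (R2 x) x)
    (hG2 : ∀ x, X ≤ x → HasDerivAt R2 (R3 x) x)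
    (hb1 : ∀ x, X ≤ x → |G1 x| ≤ B1)
    (hb2 : ∀ x, X ≤ x → |R2 x| ≤ 1)
    (hb3 : ∀ x, X ≤ x → |R3 x| ≤ 1)
    {t : ℝ} (ht : 2 ≤ t) (hXt : X + 1 ≤ Real.log t) :
    |(G (Real.log (t+1)) + G (Real.log (t-1)) - 2 * G (Real.log t))
      - (R2 (Real.log t) - G1 (Real.log t)) / t^2| ≤ (9 + 2*B1) / t^3 := by
  have ht0 : (0:ℝ) < t := by linarith
  have ht3 : (0:ℝ) < t^3 := by positivity
  have hmpos : (0:ℝ) < 1 - 1/t := by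
    rw [sub_pos, div_lt_one ht0]; linarith
  have hppos : (0:ℝ) < 1 + 1/t := by positivity
  have e1 : Real.log (t+1) = Real.log t + Real.log (1+1/t) := by
    rw [← Real.log_mul ht0.ne' hppos.ne']; congr 1; field_simp
  have e2 : Real.log (t-1) = Real.log t + Real.log (1-1/t) := by
    rw [← Real.log_mul ht0.ne' hmpos.ne']; congr 1; field_simp
  set l0 := Real.log t with hl0
  set dp := Real.log (1+1/t) with hdp
  set dm := Real.log (1-1/t) with hdm
  rw [e1, e2]
  have hinv2 : (1:ℝ)/t ≤ 1/2 := by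
    rw [div_le_div_iff₀ ht0 (by norm_num)]; linarith
  have habs1 : |(1:ℝ)/t| ≤ 1/2 := by
    rw [abs_of_pos (by positivity)]; exact hinv2
  have bdm : |dm + 1/t| ≤ 2/t^2 := by
    have h := logb13 habs1
    rw [show (2:ℝ)/t^2 = 2*(1/t)^2 by ring]
    exact h
  have bdp : |dp - 1/t| ≤ 2/t^2 := by
    have h := logb13 (x := -(1/t)) (by rwa [abs_neg])
    rw [show (1:ℝ) - -(1/t) = 1 + 1/t by ring] at h
    rw [show (2:ℝ)/t^2 = 2*(-(1/t))^2 by ring, hdp, sub_eq_add_neg]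
    exact h
  have bsum : |dp + dm + 1/t^2| ≤ 2/t^3 := by
    have hsq : |(1:ℝ)/t^2| ≤ 1/2 := by
      rw [abs_of_pos (by positivity), div_le_div_iff₀ (by positivity) (by norm_num)]
      nlinarith
    have h := logb13 (x := 1/t^2) hsq
    have e3 : dp + dm = Real.log (1 - 1/t^2) := by
      rw [hdp, hdm, ← Real.log_mul hppos.ne' hmpos.ne']; congr 1; field_simp; ring
    rw [e3]
    calc |Real.log (1 - 1/t^2) + 1/t^2| ≤ 2*(1/t^2)^2 := h
      _ = (2/t)/t^3 := by ring
      _ ≤ 2/t^3 := by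
          apply (div_le_div_iff_of_pos_right ht3).mpr
          rw [div_le_iff₀ ht0]; linarith
  have dp0 : 0 ≤ dp := Real.log_nonneg (by linarith [hppos, le_of_lt (show (0:ℝ) < 1/t by positivity)])
  have dm0 : dm ≤ 0 := Real.log_nonpos hmpos.le (by linarith [le_of_lt (show (0:ℝ) < 1/t by positivity)])
  have h2t2 : 2/t^2 ≤ 1/t := by
    rw [div_le_div_iff₀ (by positivity) ht0]; nlinarith
  have dpu : dp ≤ 2/t := by
    have h := (abs_le.mp bdp).2
    have e : (1:ℝ)/t + 1/t = 2/t := by ring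
    linarith
  have dml : -(2/t) ≤ dm := by
    have h := (abs_le.mp bdm).1
    have e : (1:ℝ)/t + 1/t = 2/t := by ring
    linarith
  have h2t1 : 2/t ≤ 1 := by rw [div_le_one ht0]; linarith
  have hXl0 : X ≤ l0 := by linarith
  -- Taylor on the right interval [l0, l0+dp]
  have memr : ∀ x ∈ Icc l0 (l0 + dp), X ≤ x := fun x hx => le_trans hXl0 hx.1
  have ep := taylor_bound13 (f := G) (f1 := G1) (f2 := R2) (f3 := R3)
    (a := l0) (b := l0 + dp) (M := 1) (by linarith)
    (fun x hx => hG x (memr x hx)) (fun x hx => hG1 x (memr x hx))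
    (fun x hx => hG2 x (memr x hx)) (fun x hx => hb3 x (memr x hx))
  rw [add_sub_cancel_left] at ep
  -- Taylor on the left interval [l0+dm, l0]
  have meml : ∀ x ∈ Icc (l0 + dm) l0, X ≤ x := by
    intro x hx
    have h1 := hx.1
    linarith [dml, h2t1]
  have em := taylor_bound13_left (f := G) (f1 := G1) (f2 := R2) (f3 := R3)
    (a := l0 + dm) (b := l0) (M := 1) (by linarith)
    (fun x hx => hG x (meml x hx)) (fun x hx => hG1 x (meml x hx))
    (fun x hx => hG2 x (meml x hx)) (fun x hx => hb3 x (meml x hx))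
  rw [show l0 - (l0 + dm) = -dm by ring] at em
  -- rewrite em into the standard form
  have em' : |G (l0 + dm) - G l0 - G1 l0 * dm - R2 l0 * dm^2/2| ≤ 1 * (-dm)^3/6 := by
    calc |G (l0 + dm) - G l0 - G1 l0 * dm - R2 l0 * dm^2/2|
        = |G (l0 + dm) - G l0 + G1 l0 * (-dm) - R2 l0 * (-dm)^2/2| := by ring_nf
      _ ≤ 1 * (-dm)^3/6 := em
  -- abbreviations
  set Ip := G (l0 + dp) - G l0 - G1 l0 * dp - R2 l0 * dp^2/2 with hIp
  set Im := G (l0 + dm) - G l0 - G1 l0 * dm - R2 l0 * dm^2/2 with hIm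
  have key : (G (l0 + dp) + G (l0 + dm) - 2 * G l0) - (R2 l0 - G1 l0)/t^2
      = Ip + Im + G1 l0 * (dp + dm + 1/t^2) + R2 l0 * ((dp^2 + dm^2)/2 - 1/t^2) := by
    rw [hIp, hIm]; ring
  have cube : dp^3 ≤ (2/t)^3 := pow_le_pow_left₀ dp0 dpu 3
  have cubem : (-dm)^3 ≤ (2/t)^3 := pow_le_pow_left₀ (by linarith) (by linarith) 3
  have hIp_le : |Ip| ≤ (2/t)^3/6 := by
    calc |Ip| ≤ 1 * dp^3/6 := ep
      _ ≤ (2/t)^3/6 := by linarith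
  have hIm_le : |Im| ≤ (2/t)^3/6 := by
    calc |Im| ≤ 1 * (-dm)^3/6 := em'
      _ ≤ (2/t)^3/6 := by linarith
  -- Z2 bound
  have hdp1 : |dp + 1/t| ≤ 3/t := by
    rw [abs_le]; constructor
    · have : (0:ℝ) < 3/t := by positivity
      have : (0:ℝ) ≤ 1/t := by positivity
      linarith
    · have e : (2:ℝ)/t + 1/t = 3/t := by ring
      linarith
  have hdm1 : |dm - 1/t| ≤ 3/t := by
    rw [abs_le]; constructor
    · have e : -((2:ℝ)/t) - 1/t = -(3/t) := by ring
      linarith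
    · have : (0:ℝ) ≤ 1/t := by positivity
      have : (0:ℝ) ≤ 3/t := by positivity
      linarith
  have d2p : |dp^2 - 1/t^2| ≤ 6/t^3 := by
    rw [show dp^2 - 1/t^2 = (dp - 1/t)*(dp + 1/t) by ring, abs_mul]
    calc |dp - 1/t| * |dp + 1/t| ≤ (2/t^2) * (3/t) :=
          mul_le_mul bdp hdp1 (abs_nonneg _) (by positivity)
      _ = 6/t^3 := by ring
  have d2m : |dm^2 - 1/t^2| ≤ 6/t^3 := by
    rw [show dm^2 - 1/t^2 = (dm + 1/t)*(dm - 1/t) by ring, abs_mul]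
    calc |dm + 1/t| * |dm - 1/t| ≤ (2/t^2) * (3/t) :=
          mul_le_mul bdm hdm1 (abs_nonneg _) (by positivity)
      _ = 6/t^3 := by ring
  have hz2 : |(dp^2 + dm^2)/2 - 1/t^2| ≤ 6/t^3 := by
    rw [show (dp^2 + dm^2)/2 - 1/t^2 = ((dp^2 - 1/t^2) + (dm^2 - 1/t^2))/2 by ring, abs_div,
      abs_two]
    have := (abs_add_le (dp^2 - 1/t^2) (dm^2 - 1/t^2)).trans (add_le_add d2p d2m)
    calc |dp^2 - 1/t^2 + (dm^2 - 1/t^2)|/2 ≤ (6/t^3 + 6/t^3)/2 := by linarith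
      _ = 6/t^3 := by ring
  have hpz1 : |G1 l0 * (dp + dm + 1/t^2)| ≤ B1 * (2/t^3) := by
    rw [abs_mul]
    exact mul_le_mul (hb1 l0 hXl0) bsum (abs_nonneg _) hB1
  have hpz2 : |R2 l0 * ((dp^2 + dm^2)/2 - 1/t^2)| ≤ 1 * (6/t^3) := by
    rw [abs_mul]
    exact mul_le_mul (hb2 l0 hXl0) hz2 (abs_nonneg _) zero_le_one
  calc |(G (l0 + dp) + G (l0 + dm) - 2 * G l0) - (R2 l0 - G1 l0)/t^2|
      = |Ip + Im + G1 l0 * (dp + dm + 1/t^2) + R2 l0 * ((dp^2 + dm^2)/2 - 1/t^2)| := by rw [key]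
    _ ≤ |Ip + Im + G1 l0 * (dp + dm + 1/t^2)| + |R2 l0 * ((dp^2 + dm^2)/2 - 1/t^2)| := abs_add_le _ _
    _ ≤ (|Ip + Im| + |G1 l0 * (dp + dm + 1/t^2)|) + |R2 l0 * ((dp^2 + dm^2)/2 - 1/t^2)| := by
        linarith [abs_add_le (Ip + Im) (G1 l0 * (dp + dm + 1/t^2))]
    _ ≤ ((|Ip| + |Im|) + |G1 l0 * (dp + dm + 1/t^2)|) + |R2 l0 * ((dp^2 + dm^2)/2 - 1/t^2)| := by
        linarith [abs_add_le Ip Im]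
    _ ≤ (((2/t)^3/6 + (2/t)^3/6) + B1 * (2/t^3)) + 1 * (6/t^3) := by
        linarith
    _ = (8/6 + 8/6 + 2*B1 + 6)/t^3 := by ring
    _ ≤ (9 + 2*B1)/t^3 := by
        apply (div_le_div_iff_of_pos_right ht3).mpr
        linarith

set_option maxHeartbeats 1000000 in
theorem stmt13 (p q : Polynomial ℝ) (hq : q ≠ 0) (r : ℝ → ℝ)
    (hr : ∀ x, r x = p.eval x / q.eval x)
    (hrpos : ∀ᶠ x in atTop, 0 < r x)
    (α : ℝ) (hα : 0 < α) (a u : ℕ → ℝ)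
    (ha : ∀ n : ℕ, 1 ≤ n → a n = r (Real.log n) / (n : ℝ) ^ α)
    (hu : ∀ n : ℕ, 2 ≤ n → u n = a (n - 1) * a (n + 1) / (a n) ^ 2) :
    ∃ C : ℝ,
      (fun n : ℕ => u n - (1 + (α + deriv (deriv (fun x => Real.log (r x))) (Real.log n)
            - deriv (fun x => Real.log (r x)) (Real.log n)) / (n : ℝ) ^ 2))
        =O[atTop] fun n : ℕ => (Real.log n) ^ C / (n : ℝ) ^ 3 := by
  have hp : p ≠ 0 := by
    rintro rfl
    rcases hrpos.exists with ⟨x, hx⟩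
    rw [hr x] at hx; simp at hx
  set L : ℝ → ℝ := fun x => Real.log (r x) with hL
  set R1 : ℝ → ℝ := fun x => eval x (derivative p) / eval x p
      - eval x (derivative q) / eval x q with hR1
  set R2f : ℝ → ℝ := fun x =>
      (eval x (derivative (derivative p)) / eval x p
        - (eval x (derivative p) / eval x p)^2)
      - (eval x (derivative (derivative q)) / eval x q
        - (eval x (derivative q) / eval x q)^2) with hR2f
  set R3f : ℝ → ℝ := fun x =>
      (eval x (derivative (derivative (derivative p))) / eval x p
        - 3 * (eval x (derivative (derivative p)) / eval x p)
            * (eval x (derivative p) / eval x p)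
        + 2 * (eval x (derivative p) / eval x p)^3)
      - (eval x (derivative (derivative (derivative q))) / eval x q
        - 3 * (eval x (derivative (derivative q)) / eval x q)
            * (eval x (derivative q) / eval x q)
        + 2 * (eval x (derivative q) / eval x q)^3) with hR3f
  set G : ℝ → ℝ := fun x => L x - α * x with hG
  set G1 : ℝ → ℝ := fun x => R1 x - α with hG1
  have hLd : ∀ x, eval x p ≠ 0 → eval x q ≠ 0 → HasDerivAt L (R1 x) x :=
    fun x hpx hqx => hasDerivAt_L p q r hr hpx hqx
  have hR1d : ∀ x, eval x p ≠ 0 → eval x q ≠ 0 → HasDerivAt R1 (R2f x) x :=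
    fun x hpx hqx => (hasDerivAt_c1 p hpx).sub (hasDerivAt_c1 q hqx)
  have hR2d : ∀ x, eval x p ≠ 0 → eval x q ≠ 0 → HasDerivAt R2f (R3f x) x :=
    fun x hpx hqx => (hasDerivAt_c2 p hpx).sub (hasDerivAt_c2 q hqx)
  have hGd : ∀ x, eval x p ≠ 0 → eval x q ≠ 0 → HasDerivAt G (G1 x) x := by
    intro x hpx hqx
    have h := (hLd x hpx hqx).sub ((hasDerivAt_id x).const_mul α)
    simpa [Pi.sub_def] using h
  have hG1d : ∀ x, eval x p ≠ 0 → eval x q ≠ 0 → HasDerivAt G1 (R2f x) x :=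
    fun x hpx hqx => (hR1d x hpx hqx).sub_const α
  have hderiv1 : ∀ x, eval x p ≠ 0 → eval x q ≠ 0 → deriv L x = R1 x :=
    fun x hpx hqx => (hLd x hpx hqx).deriv
  have hderiv2 : ∀ x, eval x p ≠ 0 → eval x q ≠ 0 → deriv (deriv L) x = R2f x := by
    intro x hpx hqx
    have hev : deriv L =ᶠ[nhds x] R1 := by
      filter_upwards [p.continuousAt.eventually_ne hpx, q.continuousAt.eventually_ne hqx]
        with y h1 h2
      exact (hLd y h1 h2).deriv
    exact hev.deriv_eq.trans (hR1d x hpx hqx).deriv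
  -- eventual bounds
  have hT1 : Tendsto R1 atTop (nhds 0) := by
    simpa using (ratio_tendsto1 p hp).sub (ratio_tendsto1 q hq)
  have hT2 : Tendsto R2f atTop (nhds 0) := by
    simpa using (tendsto_c2 p hp).sub (tendsto_c2 q hq)
  have hT3 : Tendsto R3f atTop (nhds 0) := by
    simpa using (tendsto_c3 p hp).sub (tendsto_c3 q hq)
  have habs : ∀ {f : ℝ → ℝ}, Tendsto f atTop (nhds 0) → ∀ᶠ x in atTop, |f x| ≤ 1 := by
    intro f hf
    have := NormedAddCommGroup.tendsto_nhds_zero.mp hf 1 one_pos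
    filter_upwards [this] with x hx
    exact le_of_lt (by simpa [Real.norm_eq_abs] using hx)
  have hev : ∀ᶠ x in atTop, (eval x p ≠ 0 ∧ eval x q ≠ 0) ∧ 0 < r x ∧ |R1 x| ≤ 1
      ∧ |R2f x| ≤ 1 ∧ |R3f x| ≤ 1 := by
    filter_upwards [p.eventually_no_roots hp, q.eventually_no_roots hq, hrpos,
      habs hT1, habs hT2, habs hT3] with x h1 h2 h3 h4 h5 h6
    exact ⟨⟨h1, h2⟩, h3, h4, h5, h6⟩
  obtain ⟨X, hX⟩ := Filter.eventually_atTop.mp hev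
  set B1 : ℝ := 1 + α with hB1
  have hGb : ∀ x, X ≤ x → |G1 x| ≤ B1 := by
    intro x hx
    have h := (hX x hx).2.2.1
    rcases abs_le.mp h with ⟨h1, h2⟩
    have : G1 x = R1 x - α := by rw [hG1]
    rw [this, hB1, abs_le]
    constructor <;> linarith
  have hGd' : ∀ x, X ≤ x → HasDerivAt G (G1 x) x :=
    fun x hx => hGd x (hX x hx).1.1 (hX x hx).1.2
  have hG1d' : ∀ x, X ≤ x → HasDerivAt G1 (R2f x) x :=
    fun x hx => hG1d x (hX x hx).1.1 (hX x hx).1.2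
  have hR2d' : ∀ x, X ≤ x → HasDerivAt R2f (R3f x) x :=
    fun x hx => hR2d x (hX x hx).1.1 (hX x hx).1.2
  have hb2' : ∀ x, X ≤ x → |R2f x| ≤ 1 := fun x hx => (hX x hx).2.2.2.1
  have hb3' : ∀ x, X ≤ x → |R3f x| ≤ 1 := fun x hx => (hX x hx).2.2.2.2
  set K3 : ℝ := 9 + 2*B1 with hK3
  set K1 : ℝ := α + 2 + K3 with hK1
  refine ⟨0, ?_⟩
  rw [Asymptotics.isBigO_iff]
  refine ⟨K1^2 + K3, ?_⟩
  have hlogT : Tendsto (fun n : ℕ => Real.log n) atTop atTop :=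
    Real.tendsto_log_atTop.comp tendsto_natCast_atTop_atTop
  filter_upwards [hlogT.eventually_ge_atTop (X + 1), Filter.eventually_ge_atTop 2,
    (tendsto_natCast_atTop_atTop (R := ℝ)).eventually_ge_atTop K1] with n hXn hn2 hKn
  have hn2R : (2:ℝ) ≤ (n:ℝ) := by exact_mod_cast hn2
  have hn0 : (0:ℝ) < n := by linarith
  have hn1R : (1:ℝ) ≤ (n:ℝ) := by linarith
  have ht2 : (0:ℝ) < (n:ℝ)^2 := by positivity
  have ht3 : (0:ℝ) < (n:ℝ)^3 := by positivity
  have hK30 : 0 ≤ K3 := by rw [hK3, hB1]; linarith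
  have hK10 : 0 ≤ K1 := by rw [hK1]; linarith
  -- log positions are beyond X
  have hl0X : X ≤ Real.log n := by linarith
  have hlpX : X ≤ Real.log ((n:ℝ)+1) := by
    have := Real.log_le_log hn0 (by linarith : (n:ℝ) ≤ (n:ℝ)+1)
    linarith
  have hlmX : X ≤ Real.log ((n:ℝ)-1) := by
    have h1 : Real.log ((n:ℝ)/2) ≤ Real.log ((n:ℝ)-1) :=
      Real.log_le_log (by positivity) (by linarith)
    have h2 : Real.log ((n:ℝ)/2) = Real.log n - Real.log 2 :=
      Real.log_div hn0.ne' two_ne_zero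
    have h3 := Real.log_two_lt_d9
    linarith
  -- exp formula
  have hexp : ∀ t : ℝ, 0 < t → X ≤ Real.log t →
      r (Real.log t) / t ^ α = Real.exp (G (Real.log t)) := by
    intro t ht hXt
    have hrt : 0 < r (Real.log t) := (hX _ hXt).2.1
    rw [Real.rpow_def_of_pos ht, ← Real.exp_log hrt, ← Real.exp_sub]
    congr 1
    simp only [hG, hL]
    ring
  have han : a n = Real.exp (G (Real.log n)) := by
    rw [ha n (by omega)]; exact hexp n hn0 hl0X
  have hap : a (n+1) = Real.exp (G (Real.log ((n:ℝ)+1))) := by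
    rw [ha (n+1) (by omega)]; push_cast
    exact hexp _ (by linarith) hlpX
  have ham : a (n-1) = Real.exp (G (Real.log ((n:ℝ)-1))) := by
    rw [ha (n-1) (by omega)]
    rw [Nat.cast_sub (by omega : 1 ≤ n), Nat.cast_one]
    exact hexp _ (by linarith) hlmX
  have hun : u n = Real.exp (G (Real.log ((n:ℝ)+1)) + G (Real.log ((n:ℝ)-1))
      - 2 * G (Real.log n)) := by
    rw [hu n hn2, ham, hap, han, sq, ← Real.exp_add, ← Real.exp_add, ← Real.exp_sub]
    congr 1
    ring
  set S : ℝ := G (Real.log ((n:ℝ)+1)) + G (Real.log ((n:ℝ)-1)) - 2 * G (Real.log n) with hS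
  set c : ℝ := R2f (Real.log n) - G1 (Real.log n) with hc
  have hmain : |S - c/(n:ℝ)^2| ≤ K3/(n:ℝ)^3 := by
    have h := main_est13 (by rw [hB1]; linarith : (0:ℝ) ≤ B1) hGd' hG1d' hR2d' hGb hb2' hb3'
      hn2R hXn
    rw [hS, hc, hK3]
    exact h
  have hcb : |c| ≤ 2 + α := by
    have h1 := hb2' _ hl0X
    have h2 := hGb _ hl0X
    rcases abs_le.mp h1 with ⟨h1a, h1b⟩
    rcases abs_le.mp h2 with ⟨h2a, h2b⟩
    rw [hc, abs_le]
    rw [hB1] at h2a h2b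
    constructor <;> linarith
  have hS1 : |S| ≤ K1/(n:ℝ)^2 := by
    have e1 : |S| ≤ |S - c/(n:ℝ)^2| + |c/(n:ℝ)^2| := by
      calc |S| = |(S - c/(n:ℝ)^2) + c/(n:ℝ)^2| := by congr 1; ring
        _ ≤ _ := abs_add_le _ _
    have e2 : |c/(n:ℝ)^2| ≤ (2+α)/(n:ℝ)^2 := by
      rw [abs_div, abs_of_pos ht2]
      exact div_le_div_of_nonneg_right hcb ht2.le
    have e3 : K3/(n:ℝ)^3 ≤ K3/(n:ℝ)^2 :=
      div_le_div_of_nonneg_left hK30 ht2 (by nlinarith)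
    have e4 : (2+α)/(n:ℝ)^2 + K3/(n:ℝ)^2 = K1/(n:ℝ)^2 := by rw [hK1]; ring
    linarith
  have hSle1 : |S| ≤ 1 := by
    have e1 : K1/(n:ℝ)^2 ≤ (n:ℝ)/(n:ℝ)^2 := by
      exact div_le_div_of_nonneg_right hKn ht2.le
    have e2 : (n:ℝ)/(n:ℝ)^2 = 1/(n:ℝ) := by field_simp
    have e3 : (1:ℝ)/(n:ℝ) ≤ 1 := by rw [div_le_one hn0]; linarith
    linarith
  have hexpS : |Real.exp S - 1 - S| ≤ S^2 := Real.abs_exp_sub_one_sub_id_le hSle1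
  have hS2 : S^2 ≤ K1^2/(n:ℝ)^3 := by
    have e1 : S^2 ≤ (K1/(n:ℝ)^2)^2 := by
      rw [← sq_abs]
      exact pow_le_pow_left₀ (abs_nonneg S) hS1 2
    have e2 : (K1/(n:ℝ)^2)^2 = K1^2/(n:ℝ)^4 := by ring
    have e3 : K1^2/(n:ℝ)^4 ≤ K1^2/(n:ℝ)^3 :=
      div_le_div_of_nonneg_left (by positivity) ht3 (pow_le_pow_right₀ hn1R (by norm_num))
    linarith
  -- identify the deriv expression
  have hid : α + deriv (deriv L) (Real.log n) - deriv L (Real.log n) = c := by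
    rw [hderiv2 _ (hX _ hl0X).1.1 (hX _ hl0X).1.2,
      hderiv1 _ (hX _ hl0X).1.1 (hX _ hl0X).1.2, hc, hG1]
    ring
  rw [hid, hun]
  rw [Real.norm_eq_abs, Real.norm_eq_abs, Real.rpow_zero]
  have habs1 : |Real.exp S - (1 + c/(n:ℝ)^2)| ≤ |Real.exp S - 1 - S| + |S - c/(n:ℝ)^2| := by
    calc |Real.exp S - (1 + c/(n:ℝ)^2)|
        = |(Real.exp S - 1 - S) + (S - c/(n:ℝ)^2)| := by congr 1; ring
      _ ≤ _ := abs_add_le _ _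
  have hrhs : |1/(n:ℝ)^3| = 1/(n:ℝ)^3 := abs_of_pos (by positivity)
  rw [hrhs]
  have hfin : K1^2/(n:ℝ)^3 + K3/(n:ℝ)^3 = (K1^2 + K3) * (1/(n:ℝ)^3) := by ring
  calc |Real.exp S - (1 + c / (n:ℝ)^2)|
      ≤ |Real.exp S - 1 - S| + |S - c/(n:ℝ)^2| := habs1
    _ ≤ S^2 + K3/(n:ℝ)^3 := add_le_add hexpS hmain
    _ ≤ K1^2/(n:ℝ)^3 + K3/(n:ℝ)^3 := by linarith
    _ = (K1^2 + K3) * (1/(n:ℝ)^3) := hfin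
end

section
/- Let a_n = r(log n)/n^α where r is a rational function and α > 0. Then a_{n+1} + a_{n-1} - 2a_n = r̃_2(log n)/n^{2+α} + o((log n)^C/n^{2+α}) where r̃_2(x) = α(α+1)r(x) - (2α+1)r'(x) + r''(x). -/
open Real Filter Asymptotics Polynomial

private lemma ratHasDerivAt (A B : Polynomial ℝ) {x : ℝ} (hB : B.eval x ≠ 0) :
    HasDerivAt (fun t => A.eval t / B.eval t)
      ((A.derivative * B - A * B.derivative).eval x / (B ^ 2).eval x) x := by
  simpa only [eval_mul, eval_sub, eval_pow, sq, Pi.div_def] using (A.hasDerivAt x).div (B.hasDerivAt x) hB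

private lemma denomBound (B : Polynomial ℝ) (hB : B ≠ 0) :
    ∃ b : ℝ, 0 < b ∧ ∀ᶠ t in atTop, b ≤ |B.eval t| := by
  rcases lt_or_ge 0 B.degree with h | h
  · exact ⟨1, one_pos, (Polynomial.abs_tendsto_atTop B h).eventually_ge_atTop 1⟩
  · have hC := Polynomial.eq_C_of_degree_le_zero h
    have hc0 : B.coeff 0 ≠ 0 := by
      intro h0; apply hB; rw [hC, h0, map_zero]
    refine ⟨|B.coeff 0|, abs_pos.2 hc0, Eventually.of_forall fun t => ?_⟩
    rw [hC]; simp

private def EvP (g : ℝ → ℝ) : Prop :=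
  ∃ c : ℝ, ∃ D : ℕ, 0 ≤ c ∧ ∀ᶠ t in atTop, |g t| ≤ c * t ^ D

private lemma EvP_rat (A B : Polynomial ℝ) (hB : B ≠ 0) :
    EvP (fun t => A.eval t / B.eval t) := by
  obtain ⟨b, hb, hev⟩ := denomBound B hB
  have h1 : (fun x => eval x A) =O[atTop] fun x => eval x (X ^ A.natDegree : Polynomial ℝ) :=
    Polynomial.isBigO_of_degree_le (P := A) (Q := X ^ A.natDegree) (by rw [Polynomial.degree_X_pow]; exact A.degree_le_natDegree)
  obtain ⟨c, hc⟩ := h1.bound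
  refine ⟨max (c / b) 0, A.natDegree, le_max_right _ _, ?_⟩
  filter_upwards [hev, hc, eventually_ge_atTop (0:ℝ)] with t h1 h2 h3
  have hnum : |A.eval t| ≤ c * t ^ A.natDegree := by
    simpa [abs_of_nonneg h3] using h2
  have hnn : (0:ℝ) ≤ c * t ^ A.natDegree := le_trans (abs_nonneg _) hnum
  have : |A.eval t / B.eval t| ≤ (c * t ^ A.natDegree) / b := by
    rw [abs_div]
    exact div_le_div₀ hnn hnum hb h1
  refine this.trans ?_
  rw [mul_div_right_comm]
  exact mul_le_mul_of_nonneg_right (le_max_left _ _) (pow_nonneg h3 _)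

private lemma EvP.add' {g h : ℝ → ℝ} (hg : EvP g) (hh : EvP h) :
    EvP (fun t => g t + h t) := by
  obtain ⟨c1, D1, hc1, he1⟩ := hg
  obtain ⟨c2, D2, hc2, he2⟩ := hh
  refine ⟨c1 + c2, max D1 D2, by positivity, ?_⟩
  filter_upwards [he1, he2, eventually_ge_atTop (1:ℝ)] with t h1 h2 h3
  have ht0 : (0:ℝ) ≤ t := le_trans zero_le_one h3
  have p1 : t ^ D1 ≤ t ^ max D1 D2 := pow_le_pow_right₀ h3 (le_max_left _ _)
  have p2 : t ^ D2 ≤ t ^ max D1 D2 := pow_le_pow_right₀ h3 (le_max_right _ _)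
  calc |g t + h t| ≤ |g t| + |h t| := abs_add_le _ _
    _ ≤ c1 * t ^ max D1 D2 + c2 * t ^ max D1 D2 := by
        refine add_le_add (h1.trans ?_) (h2.trans ?_)
        · exact mul_le_mul_of_nonneg_left p1 hc1
        · exact mul_le_mul_of_nonneg_left p2 hc2
    _ = (c1 + c2) * t ^ max D1 D2 := by ring

private lemma EvP.cmul {g : ℝ → ℝ} (hg : EvP g) (k : ℝ) :
    EvP (fun t => k * g t) := by
  obtain ⟨c, D, hc, he⟩ := hg
  refine ⟨|k| * c, D, by positivity, ?_⟩
  filter_upwards [he] with t h1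
  rw [abs_mul, mul_assoc]
  exact mul_le_mul_of_nonneg_left h1 (abs_nonneg k)

private lemma EvP.sub' {g h : ℝ → ℝ} (hg : EvP g) (hh : EvP h) :
    EvP (fun t => g t - h t) := by
  have := hg.add' (hh.cmul (-1))
  simpa [sub_eq_add_neg] using this

private lemma Tlem (s ds : ℝ → ℝ) (c : ℝ) {x : ℝ} (hx : 0 < x)
    (h : HasDerivAt s (ds (Real.log x)) (Real.log x)) :
    HasDerivAt (fun y => s (Real.log y) * y ^ (-c))
      ((ds (Real.log x) - c * s (Real.log x)) * x ^ (-(c+1))) x := by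
  have h1 : HasDerivAt (fun y => s (Real.log y)) (ds (Real.log x) * x⁻¹) x :=
    h.comp x (Real.hasDerivAt_log hx.ne')
  have h2 : HasDerivAt (fun y : ℝ => y ^ (-c)) ((-c) * x ^ (-c - 1)) x :=
    Real.hasDerivAt_rpow_const (Or.inl hx.ne')
  have h3 := h1.mul h2
  refine h3.congr_deriv ?_
  have hx1 : x ^ (-(c+1)) = x⁻¹ * x ^ (-c) := by
    rw [show -(c+1) = (-1) + (-c) by ring, Real.rpow_add hx, Real.rpow_neg_one]
  have hx2 : x ^ (-c - 1) = x⁻¹ * x ^ (-c) := by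
    rw [show -c - 1 = (-1) + (-c) by ring, Real.rpow_add hx, Real.rpow_neg_one]
  rw [hx1, hx2]; ring

set_option maxHeartbeats 1000000 in
theorem stmt14 (p q : Polynomial ℝ) (hq : q ≠ 0) (r : ℝ → ℝ)
    (hr : ∀ x, r x = p.eval x / q.eval x)
    (α : ℝ) (hα : 0 < α) (a : ℕ → ℝ)
    (ha : ∀ n : ℕ, 1 ≤ n → a n = r (Real.log n) / (n : ℝ) ^ α) :
    ∃ C : ℝ,
      (fun n : ℕ => a (n + 1) + a (n - 1) - 2 * a n
          - (α * (α + 1) * r (Real.log n) - (2 * α + 1) * deriv r (Real.log n)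
              + deriv (deriv r) (Real.log n)) / (n : ℝ) ^ (2 + α))
        =o[atTop] fun n : ℕ => (Real.log n) ^ C / (n : ℝ) ^ (2 + α) := by
  classical
  set p1 : Polynomial ℝ := p.derivative * q - p * q.derivative with hp1def
  set q1 : Polynomial ℝ := q ^ 2 with hq1def
  set p2 : Polynomial ℝ := p1.derivative * q1 - p1 * q1.derivative with hp2def
  set q2 : Polynomial ℝ := q1 ^ 2 with hq2def
  set p3 : Polynomial ℝ := p2.derivative * q2 - p2 * q2.derivative with hp3def
  set q3 : Polynomial ℝ := q2 ^ 2 with hq3def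
  have hq1 : q1 ≠ 0 := pow_ne_zero _ hq
  have hq2' : q2 ≠ 0 := pow_ne_zero _ hq1
  have hq3' : q3 ≠ 0 := pow_ne_zero _ hq2'
  set e0 : ℝ → ℝ := fun t => p.eval t / q.eval t with he0def
  set e1 : ℝ → ℝ := fun t => p1.eval t / q1.eval t with he1def
  set e2 : ℝ → ℝ := fun t => p2.eval t / q2.eval t with he2def
  set e3 : ℝ → ℝ := fun t => p3.eval t / q3.eval t with he3def
  have hre : r = e0 := funext hr
  have hq1ne : ∀ t : ℝ, q.eval t ≠ 0 → q1.eval t ≠ 0 := fun t ht => by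
    rw [hq1def, eval_pow]; exact pow_ne_zero 2 ht
  have hq2ne : ∀ t : ℝ, q.eval t ≠ 0 → q2.eval t ≠ 0 := fun t ht => by
    rw [hq2def, eval_pow]; exact pow_ne_zero 2 (hq1ne t ht)
  have hde0 : ∀ t : ℝ, q.eval t ≠ 0 → HasDerivAt e0 (e1 t) t := fun t ht =>
    ratHasDerivAt p q ht
  have hde1 : ∀ t : ℝ, q.eval t ≠ 0 → HasDerivAt e1 (e2 t) t := fun t ht =>
    ratHasDerivAt p1 q1 (hq1ne t ht)
  have hde2 : ∀ t : ℝ, q.eval t ≠ 0 → HasDerivAt e2 (e3 t) t := fun t ht =>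
    ratHasDerivAt p2 q2 (hq2ne t ht)
  have hopen : IsOpen {t : ℝ | q.eval t ≠ 0} :=
    isOpen_compl_singleton.preimage q.continuous
  have hd1 : ∀ t : ℝ, q.eval t ≠ 0 → deriv r t = e1 t := fun t ht => by
    rw [hre]; exact (hde0 t ht).deriv
  have hd2 : ∀ t : ℝ, q.eval t ≠ 0 → deriv (deriv r) t = e2 t := fun t ht => by
    have hev : deriv r =ᶠ[nhds t] e1 :=
      eventually_of_mem (hopen.mem_nhds ht) (fun s hs => hd1 s hs)
    rw [hev.deriv_eq]
    exact (hde1 t ht).deriv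
  set w1 : ℝ → ℝ := fun t => e1 t - α * e0 t with hw1def
  set w2 : ℝ → ℝ := fun t => e2 t - (2*α+1) * e1 t + α*(α+1) * e0 t with hw2def
  set w2d : ℝ → ℝ := fun t => e3 t - (2*α+1) * e2 t + α*(α+1) * e1 t with hw2ddef
  set w3 : ℝ → ℝ := fun t => w2d t - (α+2) * w2 t with hw3def
  set f : ℝ → ℝ := fun y => e0 (Real.log y) * y ^ (-α) with hfdef
  set F1 : ℝ → ℝ := fun y => w1 (Real.log y) * y ^ (-(α+1)) with hF1def
  set F2 : ℝ → ℝ := fun y => w2 (Real.log y) * y ^ (-(α+2)) with hF2def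
  set F3 : ℝ → ℝ := fun y => w3 (Real.log y) * y ^ (-(α+3)) with hF3def
  have hDf : ∀ x : ℝ, 0 < x → q.eval (Real.log x) ≠ 0 → HasDerivAt f (F1 x) x :=
    fun x hx ht => Tlem e0 e1 α hx (hde0 _ ht)
  have hDF1 : ∀ x : ℝ, 0 < x → q.eval (Real.log x) ≠ 0 → HasDerivAt F1 (F2 x) x := by
    intro x hx ht
    have hw : HasDerivAt w1 ((fun t => e2 t - α * e1 t) (Real.log x)) (Real.log x) :=
      (hde1 _ ht).sub ((hde0 _ ht).const_mul α)
    have h := Tlem w1 (fun t => e2 t - α * e1 t) (α+1) hx hw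
    convert h using 1
    rw [hF2def, show -(α+2) = -((α+1)+1) by ring]
    simp only [hw1def, hw2def]
    ring
  have hDF2 : ∀ x : ℝ, 0 < x → q.eval (Real.log x) ≠ 0 → HasDerivAt F2 (F3 x) x := by
    intro x hx ht
    have hw : HasDerivAt w2 (w2d (Real.log x)) (Real.log x) :=
      ((hde2 _ ht).sub ((hde1 _ ht).const_mul (2*α+1))).add ((hde0 _ ht).const_mul (α*(α+1)))
    have h := Tlem w2 w2d (α+2) hx hw
    convert h using 1
    rw [hF3def, show -(α+3) = -((α+2)+1) by ring]
  have hEv : EvP w3 := by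
    have h0 : EvP e0 := EvP_rat p q hq
    have h1 : EvP e1 := EvP_rat p1 q1 hq1
    have h2 : EvP e2 := EvP_rat p2 q2 hq2'
    have h3 : EvP e3 := EvP_rat p3 q3 hq3'
    have hw2 : EvP w2 := (h2.sub' (h1.cmul (2*α+1))).add' (h0.cmul (α*(α+1)))
    have hw2' : EvP w2d := (h3.sub' (h2.cmul (2*α+1))).add' (h1.cmul (α*(α+1)))
    exact hw2'.sub' (hw2.cmul (α+2))
  obtain ⟨c, D, hc, hev3⟩ := hEv
  obtain ⟨T0, hT0⟩ := eventually_atTop.1 hev3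
  obtain ⟨b, hb, hqb⟩ := denomBound q hq
  obtain ⟨M, hM⟩ := eventually_atTop.1 hqb
  have hqne : ∀ t : ℝ, M ≤ t → q.eval t ≠ 0 := by
    intro t ht h0
    have := hM t ht
    rw [h0, abs_zero] at this
    linarith
  refine ⟨(D : ℝ), ?_⟩
  rw [Asymptotics.isLittleO_iff]
  intro ε hε
  set K : ℝ := 2 * c * 2 ^ D * 2 ^ (2+α) with hKdef
  have htn : Tendsto (fun n : ℕ => (n:ℝ) - 1) atTop atTop :=
    tendsto_atTop_add_const_right _ _ tendsto_natCast_atTop_atTop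
  have hlog : Tendsto (fun n : ℕ => Real.log ((n:ℝ) - 1)) atTop atTop :=
    Real.tendsto_log_atTop.comp htn
  have hKe : ∀ᶠ n : ℕ in atTop, K * ((n:ℝ) - 1)⁻¹ ≤ ε := by
    have h0 : Tendsto (fun n : ℕ => K * ((n:ℝ)-1)⁻¹) atTop (nhds (K * 0)) :=
      tendsto_const_nhds.mul htn.inv_tendsto_atTop
    rw [mul_zero] at h0
    exact h0.eventually (eventually_le_nhds hε)
  filter_upwards [hlog.eventually_ge_atTop (max T0 M),
    hlog.eventually_ge_atTop 1, hKe, eventually_ge_atTop 3] with n hTM h1n hKn h3n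
  have hnr3 : (3:ℝ) ≤ (n:ℝ) := by exact_mod_cast h3n
  set nr : ℝ := (n:ℝ) with hnrdef
  have hm1 : (2:ℝ) ≤ nr - 1 := by linarith
  have hm1pos : (0:ℝ) < nr - 1 := by linarith
  have hnrpos : (0:ℝ) < nr := by linarith
  set I : Set ℝ := Set.Icc (nr-1) (nr+1) with hIdef
  have hIpos : ∀ x ∈ I, (0:ℝ) < x := fun x hx => lt_of_lt_of_le hm1pos hx.1
  have hlogx : ∀ x ∈ I, max T0 M ≤ Real.log x ∧ 1 ≤ Real.log x := by
    intro x hx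
    have h := Real.log_le_log hm1pos hx.1
    exact ⟨le_trans hTM h, le_trans h1n h⟩
  have hqI : ∀ x ∈ I, q.eval (Real.log x) ≠ 0 := fun x hx =>
    hqne _ (le_trans (le_max_right _ _) (hlogx x hx).1)
  have hlogn : (1:ℝ) ≤ Real.log nr := le_trans h1n (Real.log_le_log hm1pos (by linarith))
  have hlogn1 : (1:ℝ) ≤ Real.log (nr+1) :=
    le_trans h1n (Real.log_le_log hm1pos (by linarith))
  set B : ℝ := c * (Real.log (nr+1)) ^ D * (nr-1) ^ (-(α+3)) with hBdef
  have hBnn : 0 ≤ B := by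
    apply mul_nonneg (mul_nonneg hc (pow_nonneg (by linarith) D)) (Real.rpow_nonneg hm1pos.le _)
  have hF3b : ∀ x ∈ I, ‖F3 x‖ ≤ B := by
    intro x hx
    have hxpos := hIpos x hx
    have hlx := hlogx x hx
    have h1 : |w3 (Real.log x)| ≤ c * (Real.log x) ^ D :=
      hT0 _ (le_trans (le_max_left _ _) hlx.1)
    have h2 : (Real.log x) ^ D ≤ (Real.log (nr+1)) ^ D :=
      pow_le_pow_left₀ (le_trans zero_le_one hlx.2) (Real.log_le_log hxpos hx.2) D
    have h3 : x ^ (-(α+3)) ≤ (nr-1) ^ (-(α+3)) :=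
      Real.rpow_le_rpow_of_nonpos hm1pos hx.1 (by linarith)
    have h4 : (0:ℝ) ≤ x ^ (-(α+3)) := Real.rpow_nonneg hxpos.le _
    have h5 : ‖F3 x‖ = |w3 (Real.log x)| * x ^ (-(α+3)) := by
      rw [hF3def]
      simp only [Real.norm_eq_abs, abs_mul, abs_of_nonneg h4]
    rw [h5, hBdef]
    apply mul_le_mul (h1.trans (mul_le_mul_of_nonneg_left h2 hc)) h3 h4
    exact mul_nonneg hc (pow_nonneg (by linarith) D)
  have hconv : Convex ℝ I := convex_Icc _ _
  have hnrI : nr ∈ I := ⟨by linarith, by linarith⟩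
  have hIn1 : nr + 1 ∈ I := ⟨by linarith, le_rfl⟩
  have hIm1 : nr - 1 ∈ I := ⟨le_rfl, by linarith⟩
  have hdist : ∀ y ∈ I, ‖y - nr‖ ≤ 1 := by
    intro y hy
    rw [Real.norm_eq_abs, abs_le]
    exact ⟨by linarith [hy.1], by linarith [hy.2]⟩
  have hDF2I : ∀ x ∈ I, HasDerivWithinAt F2 (F3 x) I x := fun x hx =>
    (hDF2 x (hIpos x hx) (hqI x hx)).hasDerivWithinAt
  have stepA : ∀ y ∈ I, ‖F2 y - F2 nr‖ ≤ B := by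
    intro y hy
    have h := Convex.norm_image_sub_le_of_norm_hasDerivWithin_le hDF2I hF3b hconv hnrI hy
    refine h.trans ?_
    calc B * ‖y - nr‖ ≤ B * 1 := mul_le_mul_of_nonneg_left (hdist y hy) hBnn
      _ = B := mul_one B
  set ψ : ℝ → ℝ := fun y => F1 y - y * F2 nr with hψdef
  have hDψ : ∀ x ∈ I, HasDerivWithinAt ψ (F2 x - F2 nr) I x := by
    intro x hx
    have h2 : HasDerivAt (fun y : ℝ => y * F2 nr) (F2 nr) x := by
      simpa using (hasDerivAt_id x).mul_const (F2 nr)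
    exact ((hDF1 x (hIpos x hx) (hqI x hx)).sub h2).hasDerivWithinAt
  have stepB : ∀ y ∈ I, ‖ψ y - ψ nr‖ ≤ B := by
    intro y hy
    have h := Convex.norm_image_sub_le_of_norm_hasDerivWithin_le hDψ stepA hconv hnrI hy
    refine h.trans ?_
    calc B * ‖y - nr‖ ≤ B * 1 := mul_le_mul_of_nonneg_left (hdist y hy) hBnn
      _ = B := mul_one B
  set φ : ℝ → ℝ := fun y => f y - y * F1 nr - (y - nr)^2/2 * F2 nr with hφdef
  have hDφ : ∀ x ∈ I, HasDerivWithinAt φ (ψ x - ψ nr) I x := by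
    intro x hx
    have h1 := hDf x (hIpos x hx) (hqI x hx)
    have h2 : HasDerivAt (fun y : ℝ => y * F1 nr) (F1 nr) x := by
      simpa using (hasDerivAt_id x).mul_const (F1 nr)
    have h3 : HasDerivAt (fun y : ℝ => (y - nr)^2/2 * F2 nr) ((x - nr) * F2 nr) x := by
      have h4 : HasDerivAt (fun y : ℝ => (y - nr)^2) (2*(x-nr)) x := by
        simpa [Pi.pow_def] using ((hasDerivAt_id x).sub_const nr).pow 2
      have h5 := (h4.div_const 2).mul_const (F2 nr)
      refine h5.congr_deriv ?_
      ring
    have h := (h1.sub h2).sub h3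
    have heq : F1 x - F1 nr - (x - nr) * F2 nr = ψ x - ψ nr := by
      rw [hψdef]; ring
    rw [← heq]
    exact h.hasDerivWithinAt
  have stepC : ∀ y ∈ I, ‖φ y - φ nr‖ ≤ B := by
    intro y hy
    have h := Convex.norm_image_sub_le_of_norm_hasDerivWithin_le hDφ stepB hconv hnrI hy
    refine h.trans ?_
    calc B * ‖y - nr‖ ≤ B * 1 := mul_le_mul_of_nonneg_left (hdist y hy) hBnn
      _ = B := mul_one B
  -- identify a with f
  have hfa : ∀ x : ℝ, 0 < x → r (Real.log x) / x ^ α = f x := by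
    intro x hx
    rw [hre]
    show e0 (Real.log x) / x ^ α = e0 (Real.log x) * x ^ (-α)
    rw [Real.rpow_neg hx.le, div_eq_mul_inv]
  have hn1 : 1 ≤ n := by omega
  have ha1 : a (n + 1) = f (nr + 1) := by
    rw [ha (n+1) (by omega), show ((n+1 : ℕ):ℝ) = nr + 1 by push_cast [hnrdef]; ring]
    exact hfa _ (by linarith)
  have ha0 : a (n - 1) = f (nr - 1) := by
    rw [ha (n-1) (by omega), show ((n-1 : ℕ):ℝ) = nr - 1 by
      push_cast [Nat.cast_sub hn1, hnrdef]; ring]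
    exact hfa _ (by linarith)
  have han : a n = f nr := by
    rw [ha n hn1]
    exact hfa _ (by linarith)
  have hq0 : q.eval (Real.log nr) ≠ 0 := hqI nr hnrI
  have hmain : (α*(α+1)*r (Real.log nr) - (2*α+1)*deriv r (Real.log nr)
      + deriv (deriv r) (Real.log nr)) / nr^(2+α) = F2 nr := by
    rw [hd1 _ hq0, hd2 _ hq0, hre]
    show _ = (e2 (Real.log nr) - (2*α+1) * e1 (Real.log nr) + α*(α+1) * e0 (Real.log nr)) * nr ^ (-(α+2))
    rw [show -(α+2) = -(2+α) by ring, Real.rpow_neg hnrpos.le, div_eq_mul_inv]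
    ring
  have hgoalEq : a (n+1) + a (n-1) - 2*a n - (α*(α+1)*r (Real.log nr) - (2*α+1)*deriv r (Real.log nr)
      + deriv (deriv r) (Real.log nr)) / nr^(2+α)
      = (φ (nr+1) - φ nr) + (φ (nr-1) - φ nr) := by
    rw [ha1, ha0, han, hmain, hφdef]
    ring
  have hbound : ‖(φ (nr+1) - φ nr) + (φ (nr-1) - φ nr)‖ ≤ 2 * B := by
    calc ‖(φ (nr+1) - φ nr) + (φ (nr-1) - φ nr)‖
        ≤ ‖φ (nr+1) - φ nr‖ + ‖φ (nr-1) - φ nr‖ := norm_add_le _ _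
      _ ≤ B + B := add_le_add (stepC _ hIn1) (stepC _ hIm1)
      _ = 2 * B := by ring
  -- final arithmetic
  set L : ℝ := Real.log nr with hLdef
  have hLnn : (0:ℝ) ≤ L := by linarith
  have hlog2 : Real.log (nr+1) ≤ 2 * L := by
    have h2 : nr + 1 ≤ nr^2 := by nlinarith
    calc Real.log (nr+1) ≤ Real.log (nr^2) := Real.log_le_log (by linarith) h2
      _ = 2 * L := by rw [Real.log_pow]; push_cast; ring
  have hpow : (Real.log (nr+1)) ^ D ≤ 2^D * L^D := by
    rw [← mul_pow]
    exact pow_le_pow_left₀ (by linarith) hlog2 D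
  have hsplit : (nr-1) ^ (-(α+3)) = (nr-1) ^ (-(2+α)) * (nr-1)⁻¹ := by
    rw [show -(α+3) = -(2+α) + (-1) by ring, Real.rpow_add hm1pos, Real.rpow_neg_one]
  have hkey : (nr-1) ^ (-(2+α)) ≤ 2^(2+α) * nr ^ (-(2+α)) := by
    have hle : nr ≤ 2 * (nr - 1) := by linarith
    have h1 : (2 * (nr-1)) ^ (-(2+α)) ≤ nr ^ (-(2+α)) :=
      Real.rpow_le_rpow_of_nonpos hnrpos hle (by linarith)
    have h2 : ((2:ℝ) * (nr-1)) ^ (-(2+α)) = 2 ^ (-(2+α)) * (nr-1) ^ (-(2+α)) :=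
      Real.mul_rpow (by norm_num) hm1pos.le
    calc (nr-1) ^ (-(2+α)) = 2^(2+α) * (2 ^ (-(2+α)) * (nr-1) ^ (-(2+α))) := by
          rw [← mul_assoc, ← Real.rpow_add two_pos, show (2+α) + -(2+α) = 0 by ring,
            Real.rpow_zero, one_mul]
      _ = 2^(2+α) * ((2 * (nr-1)) ^ (-(2+α))) := by rw [h2]
      _ ≤ 2^(2+α) * nr ^ (-(2+α)) :=
          mul_le_mul_of_nonneg_left h1 (Real.rpow_nonneg (by norm_num) _)
  have hfinal : 2 * B ≤ ε * (L^D / nr^(2+α)) := by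
    calc 2 * B = (2*c) * (Real.log (nr+1))^D * ((nr-1) ^ (-(2+α)) * (nr-1)⁻¹) := by
          rw [hBdef, hsplit]; ring
      _ ≤ (2*c) * (2^D * L^D) * ((2^(2+α) * nr ^ (-(2+α))) * (nr-1)⁻¹) := by
          apply mul_le_mul
          · exact mul_le_mul_of_nonneg_left hpow (by positivity)
          · exact mul_le_mul_of_nonneg_right hkey (inv_nonneg.2 hm1pos.le)
          · exact mul_nonneg (Real.rpow_nonneg hm1pos.le _) (inv_nonneg.2 hm1pos.le)
          · exact mul_nonneg (by positivity) (mul_nonneg (by positivity) (pow_nonneg hLnn D))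
      _ = (K * (nr-1)⁻¹) * (L^D * nr ^ (-(2+α))) := by rw [hKdef]; ring
      _ ≤ ε * (L^D * nr ^ (-(2+α))) :=
          mul_le_mul_of_nonneg_right hKn
            (mul_nonneg (pow_nonneg hLnn D) (Real.rpow_nonneg hnrpos.le _))
      _ = ε * (L^D / nr^(2+α)) := by
          rw [Real.rpow_neg hnrpos.le, div_eq_mul_inv]
  have hnorm : ‖L ^ ((D:ℕ):ℝ) / nr^(2+α)‖ = L^D / nr^(2+α) := by
    rw [Real.rpow_natCast, Real.norm_eq_abs, abs_of_nonneg]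
    exact div_nonneg (pow_nonneg hLnn D) (Real.rpow_nonneg hnrpos.le _)
  calc ‖a (n+1) + a (n-1) - 2*a n - (α*(α+1)*r (Real.log nr) - (2*α+1)*deriv r (Real.log nr)
        + deriv (deriv r) (Real.log nr)) / nr^(2+α)‖
      = ‖(φ (nr+1) - φ nr) + (φ (nr-1) - φ nr)‖ := by rw [hgoalEq]
    _ ≤ 2 * B := hbound
    _ ≤ ε * (L^D / nr^(2+α)) := hfinal
    _ = ε * ‖L ^ ((D:ℕ):ℝ) / nr^(2+α)‖ := by rw [hnorm]
end

section
/- For a_n = n^α with real α ≥ 2, the sequence {a_n}_{n≥1} is asymptotically ℓ-log-concave for every positive integer ℓ; in particular, for ℓ = 1 and ℓ = 2: the sequence b_n = a_n^2 - a_{n-1}a_{n+1} is eventually positive, and c_n = b_n^2 - b_{n-1}b_{n+1} is eventually positive. -/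
open Real Filter

open Topology

/-- The operator φ sending {x_n} to {x_{n+1}^2 - x_n x_{n+2}}. -/
def phi (x : ℕ → ℝ) : ℕ → ℝ := fun n => x (n + 1) ^ 2 - x n * x (n + 2)

lemma analyticAt_log1p : AnalyticAt ℝ (fun t : ℝ => Real.log (1 + t)) 0 := by
  have h1 : AnalyticAt ℝ (fun t : ℝ => ((1 + t : ℝ) : ℂ)) 0 := by
    exact (Complex.ofRealCLM.analyticAt _).comp (analyticAt_const.add analyticAt_id)
  have h2 : AnalyticAt ℝ (fun t : ℝ => Complex.log ((1 + t : ℝ) : ℂ)) 0 := by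
    have hc : AnalyticAt ℂ Complex.log ((fun t : ℝ => ((1 + t : ℝ) : ℂ)) 0) := by
      apply analyticAt_clog; simp [Complex.mem_slitPlane_iff]
    have h2' : AnalyticAt ℝ (Complex.log ∘ fun t : ℝ => ((1 + t : ℝ) : ℂ)) 0 :=
      AnalyticAt.comp (AnalyticAt.restrictScalars (𝕜 := ℝ) hc) h1
    exact h2'
  have h3 : AnalyticAt ℝ (fun t : ℝ => (Complex.log ((1 + t : ℝ) : ℂ)).re) 0 :=
    (Complex.reCLM.analyticAt _).comp h2
  refine h3.congr (Filter.Eventually.of_forall fun t => ?_)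
  exact Complex.log_ofReal_re (1 + t)

lemma analyticAt_one_add_rpow (β : ℝ) : AnalyticAt ℝ (fun t : ℝ => (1 + t) ^ β) 0 := by
  have h : AnalyticAt ℝ (fun t : ℝ => rexp (Real.log (1 + t) * β)) 0 := by
    exact (analyticAt_rexp).comp (analyticAt_log1p.mul analyticAt_const)
  refine h.congr ?_
  have hev : ∀ᶠ t : ℝ in 𝓝 0, (-1 : ℝ) < t := eventually_gt_nhds (by norm_num)
  filter_upwards [hev] with t ht
  rw [Real.rpow_def_of_pos (by linarith)]

lemma analyticAt_dslope {f : ℝ → ℝ} (hf : AnalyticAt ℝ f 0) : AnalyticAt ℝ (dslope f 0) 0 := by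
  obtain ⟨p, hp⟩ := hf
  exact ⟨p.fslope, hp.has_fpower_series_dslope_fslope⟩

lemma factor_dslope (f : ℝ → ℝ) (t : ℝ) : f t = f 0 + t * dslope f 0 t := by
  have h := sub_smul_dslope f 0 t
  simp only [sub_zero, smul_eq_mul] at h
  linarith

lemma rpow_taylor2 (β : ℝ) : ∃ E : ℝ → ℝ, AnalyticAt ℝ E 0 ∧ E 0 = β * (β - 1) / 2 ∧
    ∀ t : ℝ, (1 + t) ^ β = 1 + β * t + t ^ 2 * E t := by
  set f : ℝ → ℝ := fun t => (1 + t) ^ β - 1 - β * t with hf_def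
  have hfa : AnalyticAt ℝ f 0 :=
    ((analyticAt_one_add_rpow β).sub analyticAt_const).sub (analyticAt_const.mul analyticAt_id)
  have hf0 : f 0 = 0 := by simp [hf_def]
  have hder : ∀ t : ℝ, -1 < t → HasDerivAt f (β * (1 + t) ^ (β - 1) - β) t := by
    intro t ht
    have h1 : HasDerivAt (fun s : ℝ => 1 + s) 1 t := by
      simpa using (hasDerivAt_id t).const_add (1 : ℝ)
    have h2 : HasDerivAt (fun s : ℝ => (1 + s) ^ β) (β * (1 + t) ^ (β - 1) * 1) t :=
      HasDerivAt.comp t (Real.hasDerivAt_rpow_const (Or.inl (by linarith))) h1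
    have h3 := (h2.sub_const 1).sub ((hasDerivAt_id t).const_mul β)
    simpa [hf_def, mul_comm, Pi.sub_def] using h3
  have hd : deriv f 0 = 0 := by
    have := (hder 0 (by norm_num)).deriv
    simpa using this
  set k1 : ℝ → ℝ := dslope f 0 with hk1_def
  have hk1a : AnalyticAt ℝ k1 0 := analyticAt_dslope hfa
  have hk10 : k1 0 = 0 := by rw [hk1_def, dslope_same]; exact hd
  set E : ℝ → ℝ := dslope k1 0 with hE_def
  have hEa : AnalyticAt ℝ E 0 := analyticAt_dslope hk1a
  have hfact : ∀ t : ℝ, f t = t ^ 2 * E t := by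
    intro t
    have a1 := factor_dslope f t
    have a2 := factor_dslope k1 t
    rw [hf0, hk10] at *
    rw [a1, ← hk1_def, a2, ← hE_def]
    ring
  have hval : E 0 = β * (β - 1) / 2 := by
    have hlim1 : Tendsto (fun t => f t / t ^ 2) (𝓝[≠] (0 : ℝ)) (𝓝 (β * (β - 1) / 2)) := by
      apply HasDerivAt.lhopital_zero_nhdsNE (f' := fun t => β * (1 + t) ^ (β - 1) - β)
        (g' := fun t => 2 * t)
      · apply eventually_nhdsWithin_of_eventually_nhds
        filter_upwards [eventually_gt_nhds (by norm_num : (-1 : ℝ) < 0)] with t ht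
        exact hder t ht
      · refine Filter.Eventually.of_forall fun t => ?_
        simpa using hasDerivAt_pow 2 t
      · filter_upwards [self_mem_nhdsWithin] with t ht
        exact mul_ne_zero two_ne_zero ht
      · have h : Tendsto f (𝓝 0) (𝓝 (f 0)) := hfa.continuousAt.tendsto
        rw [hf0] at h
        exact h.mono_left nhdsWithin_le_nhds
      · have h : Tendsto (fun t : ℝ => t ^ 2) (𝓝 0) (𝓝 ((0:ℝ) ^ 2)) :=
          (continuous_pow 2).tendsto 0
        simp only [ne_eq, OfNat.ofNat_ne_zero, not_false_eq_true, zero_pow] at h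
        exact h.mono_left nhdsWithin_le_nhds
      · have hF : HasDerivAt (fun t : ℝ => β * (1 + t) ^ (β - 1)) (β * (β - 1)) 0 := by
        -- derivative of β * (1+t)^(β-1) at 0 is β * ((β-1) * 1 ^ (β-2) * 1)
          have h1 : HasDerivAt (fun s : ℝ => 1 + s) 1 0 := by
            simpa using (hasDerivAt_id (0:ℝ)).const_add (1 : ℝ)
          have h2 : HasDerivAt (fun s : ℝ => (1 + s) ^ (β - 1))
              ((β - 1) * (1 + 0) ^ (β - 1 - 1) * 1) 0 :=
            HasDerivAt.comp 0 (Real.hasDerivAt_rpow_const (Or.inl (by norm_num))) h1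
          have h3 := h2.const_mul β
          simpa using h3
        have hslope := (hasDerivAt_iff_tendsto_slope.mp hF).div_const (2 : ℝ)
        refine hslope.congr' ?_
        filter_upwards [self_mem_nhdsWithin] with t (ht : t ≠ 0)
        rw [slope_def_field]
        field_simp
        simp only [add_zero, Real.one_rpow, sub_zero]
    have hlim2 : Tendsto (fun t => f t / t ^ 2) (𝓝[≠] (0 : ℝ)) (𝓝 (E 0)) := by
      have hc : Tendsto E (𝓝 (0 : ℝ)) (𝓝 (E 0)) := hEa.continuousAt.tendsto
      refine (hc.mono_left nhdsWithin_le_nhds).congr' ?_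
      filter_upwards [self_mem_nhdsWithin] with t (ht : t ≠ 0)
      rw [hfact t]
      field_simp
    exact tendsto_nhds_unique hlim2 hlim1
  refine ⟨E, hEa, hval, fun t => ?_⟩
  have := hfact t
  simp only [hf_def] at this
  linarith

def GoodSeq (x : ℕ → ℝ) : Prop :=
  ∃ γ : ℝ, 2 ≤ γ ∧ ∃ g : ℝ → ℝ, AnalyticAt ℝ g 0 ∧ 0 < g 0 ∧
    ∀ᶠ n : ℕ in atTop, x n = (n : ℝ) ^ γ * g (1 / (n : ℝ))

lemma goodSeq_pos {x : ℕ → ℝ} (hx : GoodSeq x) : ∀ᶠ n : ℕ in atTop, 0 < x n := by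
  obtain ⟨γ, hγ, g, hga, hg0, hev⟩ := hx
  have h1 : Tendsto (fun n : ℕ => g (1 / (n : ℝ))) atTop (𝓝 (g 0)) :=
    (hga.continuousAt.tendsto).comp tendsto_one_div_atTop_nhds_zero_nat
  filter_upwards [hev, h1.eventually (eventually_gt_nhds hg0), eventually_ge_atTop 1]
    with n h2 h3 h4
  rw [h2]
  have hn : (0 : ℝ) < n := by exact_mod_cast Nat.lt_of_lt_of_le Nat.zero_lt_one h4
  exact mul_pos (Real.rpow_pos_of_pos hn γ) h3

lemma real_key (γ : ℝ) (g k : ℝ → ℝ)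
    (hkey : ∀ t : ℝ, 1 + t ≠ 0 → 1 + 2 * t ≠ 0 →
      (1 + t) ^ (2 * γ) * g (t / (1 + t)) ^ 2
        - (1 + 2 * t) ^ γ * (g t * g (t / (1 + 2 * t))) = t ^ 2 * k t)
    (m : ℝ) (hm : 0 < m) :
    ((m + 1) ^ γ * g (1 / (m + 1))) ^ 2
      - (m ^ γ * g (1 / m)) * ((m + 2) ^ γ * g (1 / (m + 2)))
      = m ^ (2 * γ - 2) * k (1 / m) := by
  have hm1 : (0 : ℝ) < m + 1 := by linarith
  have hm2 : (0 : ℝ) < m + 2 := by linarith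
  have ht1 : (1 : ℝ) + 1 / m = (m + 1) / m := by field_simp
  have ht2 : (1 : ℝ) + 2 * (1 / m) = (m + 2) / m := by field_simp
  have key := hkey (1 / m) (by rw [ht1]; positivity) (by rw [ht2]; positivity)
  rw [ht1, ht2] at key
  have e1 : 1 / m / ((m + 1) / m) = 1 / (m + 1) := by
    field_simp
  have e2 : 1 / m / ((m + 2) / m) = 1 / (m + 2) := by
    field_simp
  rw [e1, e2] at key
  have d1 : ((m + 1) / m) ^ (2 * γ) = (m + 1) ^ (2 * γ) / m ^ (2 * γ) :=
    Real.div_rpow hm1.le hm.le _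
  have d2 : ((m + 2) / m) ^ γ = (m + 2) ^ γ / m ^ γ := Real.div_rpow hm2.le hm.le _
  rw [d1, d2] at key
  have e3 : ((m + 1) ^ γ) ^ 2 = (m + 1) ^ (2 * γ) := by
    rw [show (2 : ℝ) * γ = γ * 2 by ring, Real.rpow_mul hm1.le, Real.rpow_two]
  have e6 : m ^ (2 * γ) = (m ^ γ) ^ 2 := by
    rw [show (2 : ℝ) * γ = γ * 2 by ring, Real.rpow_mul hm.le, Real.rpow_two]
  have e5 : m ^ (2 * γ - 2) = m ^ (2 * γ) * (1 / m) ^ 2 := by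
    rw [Real.rpow_sub hm, Real.rpow_two]
    field_simp
  have hmγ : (0 : ℝ) < m ^ γ := Real.rpow_pos_of_pos hm γ
  calc ((m + 1) ^ γ * g (1 / (m + 1))) ^ 2
        - (m ^ γ * g (1 / m)) * ((m + 2) ^ γ * g (1 / (m + 2)))
      = (m + 1) ^ (2 * γ) * g (1 / (m + 1)) ^ 2
        - (m ^ γ * (m + 2) ^ γ) * (g (1 / m) * g (1 / (m + 2))) := by rw [← e3]; ring
    _ = m ^ (2 * γ) * ((m + 1) ^ (2 * γ) / m ^ (2 * γ) * g (1 / (m + 1)) ^ 2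
        - (m + 2) ^ γ / m ^ γ * (g (1 / m) * g (1 / (m + 2)))) := by
          rw [e6]
          field_simp
    _ = m ^ (2 * γ) * ((1 / m) ^ 2 * k (1 / m)) := by rw [key]
    _ = m ^ (2 * γ - 2) * k (1 / m) := by rw [e5]; ring

set_option maxHeartbeats 1600000 in
lemma goodSeq_phi {x : ℕ → ℝ} (hx : GoodSeq x) : GoodSeq (phi x) := by
  obtain ⟨γ, hγ, g, hga, hg0, hev⟩ := hx
  set G : ℝ → ℝ := dslope g 0 with hG_def
  set H : ℝ → ℝ := dslope G 0 with hH_def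
  have hGa : AnalyticAt ℝ G 0 := analyticAt_dslope hga
  have hHa : AnalyticAt ℝ H 0 := analyticAt_dslope hGa
  have hg_eq : ∀ s : ℝ, g s = g 0 + s * G s := fun s => factor_dslope g s
  have hG_eq : ∀ s : ℝ, G s = G 0 + s * H s := fun s => factor_dslope G s
  obtain ⟨EA, hEAa, hEA0, hEA⟩ := rpow_taylor2 (2 * γ)
  obtain ⟨E2, hE2a, hE20, hE2⟩ := rpow_taylor2 γ
  set EB : ℝ → ℝ := fun t => 4 * E2 (2 * t) with hEB_def
  have h2t : AnalyticAt ℝ (fun t : ℝ => 2 * t) 0 := analyticAt_const.mul analyticAt_id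
  have hEBa : AnalyticAt ℝ EB 0 := by
    have h1 : AnalyticAt ℝ E2 ((fun t : ℝ => 2 * t) 0) := by simpa using hE2a
    have h2 := h1.comp h2t
    exact analyticAt_const.mul (by simpa [Function.comp_def] using h2)
  have hEB0 : EB 0 = 2 * γ * (γ - 1) := by
    simp only [hEB_def, mul_zero, hE20]
    ring
  have hEB : ∀ t : ℝ, (1 + 2 * t) ^ γ = 1 + 2 * γ * t + t ^ 2 * EB t := by
    intro t
    rw [hE2 (2 * t), hEB_def]
    ring
  set k : ℝ → ℝ := fun t =>
    g 0 ^ 2 * (EA t - EB t)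
    + g 0 * (G 0 * t * ((2 * EA t - 2 * EB t - 2 + (4 * EA t - 4 * EB t - 4 * γ) * t
        - 2 * EB t * t ^ 2) / ((1 + t) * (1 + 2 * t)))
      + (2 * (1 + 2 * γ * t + t ^ 2 * EA t) * H (t / (1 + t)) / (1 + t) ^ 2
        - (1 + 2 * γ * t + t ^ 2 * EB t) * H t
        - (1 + 2 * γ * t + t ^ 2 * EB t) * H (t / (1 + 2 * t)) / (1 + 2 * t) ^ 2))
    + ((1 + 2 * γ * t + t ^ 2 * EA t) * (G (t / (1 + t))) ^ 2 / (1 + t) ^ 2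
      - (1 + 2 * γ * t + t ^ 2 * EB t) * G t * G (t / (1 + 2 * t)) / (1 + 2 * t)) with hk_def
  have hden1 : AnalyticAt ℝ (fun t : ℝ => 1 + t) 0 := analyticAt_const.add analyticAt_id
  have hden2 : AnalyticAt ℝ (fun t : ℝ => 1 + 2 * t) 0 := analyticAt_const.add h2t
  have hu : AnalyticAt ℝ (fun t : ℝ => t / (1 + t)) 0 :=
    analyticAt_id.div hden1 (by norm_num)
  have hv : AnalyticAt ℝ (fun t : ℝ => t / (1 + 2 * t)) 0 :=
    analyticAt_id.div hden2 (by norm_num)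
  have hcomp : ∀ (F : ℝ → ℝ), AnalyticAt ℝ F 0 → ∀ (w : ℝ → ℝ), AnalyticAt ℝ w 0 → w 0 = 0 →
      AnalyticAt ℝ (fun t : ℝ => F (w t)) 0 := by
    intro F hF w hw hw0
    have h1 : AnalyticAt ℝ F (w 0) := by rw [hw0]; exact hF
    simpa [Function.comp_def] using h1.comp hw
  have hHu : AnalyticAt ℝ (fun t : ℝ => H (t / (1 + t))) 0 :=
    hcomp H hHa _ hu (by norm_num)
  have hHv : AnalyticAt ℝ (fun t : ℝ => H (t / (1 + 2 * t))) 0 :=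
    hcomp H hHa _ hv (by norm_num)
  have hGu : AnalyticAt ℝ (fun t : ℝ => G (t / (1 + t))) 0 :=
    hcomp G hGa _ hu (by norm_num)
  have hGv : AnalyticAt ℝ (fun t : ℝ => G (t / (1 + 2 * t))) 0 :=
    hcomp G hGa _ hv (by norm_num)
  have hP : AnalyticAt ℝ (fun t : ℝ => 1 + 2 * γ * t + t ^ 2 * EA t) 0 :=
    (analyticAt_const.add (analyticAt_const.mul analyticAt_id)).add
      ((analyticAt_id.pow 2).mul hEAa)
  have hQ : AnalyticAt ℝ (fun t : ℝ => 1 + 2 * γ * t + t ^ 2 * EB t) 0 :=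
    (analyticAt_const.add (analyticAt_const.mul analyticAt_id)).add
      ((analyticAt_id.pow 2).mul hEBa)
  have hka : AnalyticAt ℝ k 0 := by
    rw [hk_def]
    apply AnalyticAt.add
    apply AnalyticAt.add
    · exact analyticAt_const.mul (hEAa.sub hEBa)
    · apply analyticAt_const.mul
      apply AnalyticAt.add
      · apply AnalyticAt.mul
        · exact analyticAt_const.mul analyticAt_id
        · apply AnalyticAt.div
          · apply AnalyticAt.sub
            apply AnalyticAt.add
            · exact ((analyticAt_const.mul hEAa).sub (analyticAt_const.mul hEBa)).sub
                analyticAt_const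
            · exact (((analyticAt_const.mul hEAa).sub (analyticAt_const.mul hEBa)).sub
                analyticAt_const).mul analyticAt_id
            · exact (analyticAt_const.mul hEBa).mul (analyticAt_id.pow 2)
          · exact hden1.mul hden2
          · norm_num
      · apply AnalyticAt.sub
        apply AnalyticAt.sub
        · apply AnalyticAt.div
          · exact (analyticAt_const.mul hP).mul hHu
          · exact hden1.pow 2
          · norm_num
        · exact hQ.mul hHa
        · apply AnalyticAt.div
          · exact hQ.mul hHv
          · exact hden2.pow 2
          · norm_num
    · apply AnalyticAt.sub
      · apply AnalyticAt.div
        · exact hP.mul (hGu.pow 2)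
        · exact hden1.pow 2
        · norm_num
      · apply AnalyticAt.div
        · exact (hQ.mul hGa).mul hGv
        · exact hden2
        · norm_num
  have hk0 : k 0 = γ * g 0 ^ 2 := by
    simp only [hk_def]
    norm_num
    rw [hEA0, hEB0]
    ring
  have hkey : ∀ t : ℝ, 1 + t ≠ 0 → 1 + 2 * t ≠ 0 →
      (1 + t) ^ (2 * γ) * g (t / (1 + t)) ^ 2
        - (1 + 2 * t) ^ γ * (g t * g (t / (1 + 2 * t))) = t ^ 2 * k t := by
    intro t h1 h2
    simp only [hk_def]
    rw [hEA t, hEB t, hg_eq (t / (1 + t)), hg_eq t, hg_eq (t / (1 + 2 * t)),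
      hG_eq (t / (1 + t)), hG_eq t, hG_eq (t / (1 + 2 * t))]
    set q1 := H (t / (1 + t)) with hq1
    set q2 := H (t / (1 + 2 * t)) with hq2
    set q3 := H t with hq3
    set q5 := G 0 with hq5
    set q6 := g 0 with hq6
    set q7 := EA t with hq7
    set q8 := EB t with hq8
    field_simp [h1, h2]
    ring
  refine ⟨2 * γ - 2, by linarith, k, hka, ?_, ?_⟩
  · rw [hk0]
    have : (0:ℝ) < γ := by linarith
    positivity
  · rw [eventually_atTop] at hev
    obtain ⟨N, hN⟩ := hev
    rw [eventually_atTop]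
    refine ⟨max N 1, fun n hn => ?_⟩
    have hn1 : N ≤ n := le_trans (le_max_left _ _) hn
    have hnp : 1 ≤ n := le_trans (le_max_right _ _) hn
    have hx1 := hN n hn1
    have hx2 := hN (n + 1) (by omega)
    have hx3 := hN (n + 2) (by omega)
    have hnR : (0:ℝ) < (n:ℝ) := by exact_mod_cast hnp
    have hcast1 : ((n + 1 : ℕ) : ℝ) = (n : ℝ) + 1 := by push_cast; ring
    have hcast2 : ((n + 2 : ℕ) : ℝ) = (n : ℝ) + 2 := by push_cast; ring
    show x (n + 1) ^ 2 - x n * x (n + 2) = ((n:ℝ)) ^ (2 * γ - 2) * k (1 / (n:ℝ))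
    rw [hx1, hx2, hx3, hcast1, hcast2]
    exact real_key γ g k hkey (n : ℝ) hnR

theorem stmt16 (α : ℝ) (hα : 2 ≤ α) (a b c : ℕ → ℝ)
    (ha : ∀ n : ℕ, a n = (n : ℝ) ^ α)
    (hb : ∀ n : ℕ, 1 ≤ n → b n = (a n) ^ 2 - a (n - 1) * a (n + 1))
    (hc : ∀ n : ℕ, 1 ≤ n → c n = (b n) ^ 2 - b (n - 1) * b (n + 1)) :
    (∀ ℓ : ℕ, 1 ≤ ℓ → ∀ᶠ n : ℕ in atTop, 0 < (phi^[ℓ] a) n) ∧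
    (∀ᶠ n : ℕ in atTop, 0 < b n) ∧
    (∀ᶠ n : ℕ in atTop, 0 < c n) := by
  have hgood0 : GoodSeq a := by
    refine ⟨α, hα, fun _ => 1, analyticAt_const, one_pos, ?_⟩
    filter_upwards with n
    rw [ha n, mul_one]
  have hgood : ∀ ℓ : ℕ, GoodSeq (phi^[ℓ] a) := by
    intro ℓ
    induction ℓ with
    | zero => simpa using hgood0
    | succ m ih =>
      rw [Function.iterate_succ_apply']
      exact goodSeq_phi ih
  have hb_eq : ∀ n : ℕ, 1 ≤ n → b n = phi a (n - 1) := by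
    intro n hn
    rw [hb n hn]
    show _ = a (n - 1 + 1) ^ 2 - a (n - 1) * a (n - 1 + 2)
    rw [show n - 1 + 1 = n by omega, show n - 1 + 2 = n + 1 by omega]
  have hphi1 : ∀ᶠ m : ℕ in atTop, 0 < phi a m := by
    have h := goodSeq_pos (hgood 1)
    simpa using h
  refine ⟨fun ℓ _ => goodSeq_pos (hgood ℓ), ?_, ?_⟩
  · rw [eventually_atTop] at hphi1 ⊢
    obtain ⟨M, hM⟩ := hphi1
    refine ⟨M + 1, fun n hn => ?_⟩
    rw [hb_eq n (by omega)]
    exact hM _ (by omega)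
  · have hphi2 : ∀ᶠ m : ℕ in atTop, 0 < phi (phi a) m := by
      have h := goodSeq_pos (hgood 2)
      have e : phi^[2] a = phi (phi a) := by
        rw [Function.iterate_succ_apply', Function.iterate_one]
      rwa [e] at h
    rw [eventually_atTop] at hphi2 ⊢
    obtain ⟨M, hM⟩ := hphi2
    refine ⟨M + 2, fun n hn => ?_⟩
    have h1 : b n = phi a (n - 1) := hb_eq n (by omega)
    have h2 : b (n - 1) = phi a (n - 2) := by
      rw [hb_eq (n - 1) (by omega), show n - 1 - 1 = n - 2 by omega]
    have h3 : b (n + 1) = phi a n := by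
      rw [hb_eq (n + 1) (by omega), show n + 1 - 1 = n by omega]
    rw [hc n (by omega), h1, h2, h3]
    show 0 < phi a (n - 1) ^ 2 - phi a (n - 2) * phi a n
    have h4 := hM (n - 2) (by omega)
    have e : phi (phi a) (n - 2)
        = phi a (n - 1) ^ 2 - phi a (n - 2) * phi a n := by
      show phi a (n - 2 + 1) ^ 2 - phi a (n - 2) * phi a (n - 2 + 2) = _
      rw [show n - 2 + 1 = n - 1 by omega, show n - 2 + 2 = n by omega]
    rw [← e]
    exact h4
end

section
/- The sequence a_n = 1/C_n, where C_n are the Catalan numbers, satisfies the higher order Turán inequality for all sufficiently large n: with u_n = a_{n-1}a_{n+1}/a_n^2 = (n+2)(2n-1)/((n+1)(2n+1)), one has 4(1-u_n)(1-u_{n+1}) - (1-u_n u_{n+1})^2 > 0 for all sufficiently large n. -/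
open Real Filter

theorem stmt18 (C a u : ℕ → ℝ)
    (hC : ∀ n : ℕ, C n = (1 / ((n : ℝ) + 1)) * (Nat.choose (2 * n) n : ℝ))
    (ha : ∀ n, a n = 1 / C n)
    (hu : ∀ n : ℕ, 1 ≤ n → u n = a (n - 1) * a (n + 1) / (a n) ^ 2) :
    (∀ n : ℕ, 1 ≤ n →
      u n = ((n : ℝ) + 2) * (2 * (n : ℝ) - 1) / (((n : ℝ) + 1) * (2 * (n : ℝ) + 1))) ∧
    ∀ᶠ n : ℕ in atTop,
      0 < 4 * (1 - u n) * (1 - u (n + 1)) - (1 - u n * u (n + 1)) ^ 2 := by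
  have h1 : ∀ n : ℕ, 1 ≤ n →
      u n = ((n : ℝ) + 2) * (2 * (n : ℝ) - 1) / (((n : ℝ) + 1) * (2 * (n : ℝ) + 1)) := by
    intro n hn
    obtain ⟨m, rfl⟩ : ∃ m, n = m + 1 := ⟨n - 1, by omega⟩
    have hc0 : (0:ℝ) < (Nat.choose (2 * m) m : ℝ) := by
      exact_mod_cast Nat.choose_pos (by omega)
    have hc1 : (0:ℝ) < (Nat.choose (2 * (m + 1)) (m + 1) : ℝ) := by
      exact_mod_cast Nat.choose_pos (by omega)
    have hc2 : (0:ℝ) < (Nat.choose (2 * (m + 2)) (m + 2) : ℝ) := by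
      exact_mod_cast Nat.choose_pos (by omega)
    have rec1 : ((m:ℝ) + 1) * (Nat.choose (2 * (m + 1)) (m + 1) : ℝ)
        = 2 * (2 * (m:ℝ) + 1) * (Nat.choose (2 * m) m : ℝ) := by
      have := Nat.succ_mul_centralBinom_succ m
      simp only [Nat.centralBinom] at this
      exact_mod_cast this
    have rec2 : ((m:ℝ) + 2) * (Nat.choose (2 * (m + 2)) (m + 2) : ℝ)
        = 2 * (2 * (m:ℝ) + 3) * (Nat.choose (2 * (m + 1)) (m + 1) : ℝ) := by
      have := Nat.succ_mul_centralBinom_succ (m + 1)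
      simp only [Nat.centralBinom] at this
      have h' : ((m + 1 + 1 : ℕ) : ℝ) * (Nat.choose (2 * (m + 1 + 1)) (m + 1 + 1) : ℝ)
          = 2 * (2 * ((m:ℝ) + 1) + 1) * (Nat.choose (2 * (m + 1)) (m + 1) : ℝ) := by
        exact_mod_cast this
      have e : m + 1 + 1 = m + 2 := rfl
      rw [e] at h'
      push_cast at h' ⊢
      linarith [h']
    have key : ((m:ℝ) + 1) * (2 * (m:ℝ) + 3) * (Nat.choose (2 * (m + 1)) (m + 1) : ℝ) ^ 2
        = (2 * (m:ℝ) + 1) * ((m:ℝ) + 2) * (Nat.choose (2 * m) m : ℝ)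
          * (Nat.choose (2 * (m + 2)) (m + 2) : ℝ) := by
      linear_combination (2 * (m:ℝ) + 3) * (Nat.choose (2 * (m + 1)) (m + 1) : ℝ) * rec1
        - (2 * (m:ℝ) + 1) * (Nat.choose (2 * m) m : ℝ) * rec2
    rw [hu _ hn]
    simp only [Nat.add_sub_cancel]
    rw [ha, ha, ha, hC, hC, hC]
    push_cast
    rw [div_eq_div_iff (by positivity) (by positivity)]
    field_simp
    linear_combination ((m:ℝ) + 3) * key
  refine ⟨h1, ?_⟩
  filter_upwards [eventually_ge_atTop 1] with n hn
  rw [h1 n hn, h1 (n + 1) (by omega)]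
  push_cast
  have heq : 4 * (1 - ((n:ℝ) + 2) * (2 * (n:ℝ) - 1) / (((n:ℝ) + 1) * (2 * (n:ℝ) + 1)))
        * (1 - ((n:ℝ) + 1 + 2) * (2 * ((n:ℝ) + 1) - 1) / (((n:ℝ) + 1 + 1) * (2 * ((n:ℝ) + 1) + 1)))
      - (1 - ((n:ℝ) + 2) * (2 * (n:ℝ) - 1) / (((n:ℝ) + 1) * (2 * (n:ℝ) + 1))
          * (((n:ℝ) + 1 + 2) * (2 * ((n:ℝ) + 1) - 1) / (((n:ℝ) + 1 + 1) * (2 * ((n:ℝ) + 1) + 1)))) ^ 2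
      = 36 / (((n:ℝ) + 1) ^ 2 * (2 * (n:ℝ) + 1) * ((n:ℝ) + 2) * (2 * (n:ℝ) + 3) ^ 2) := by
    have d1 : ((n:ℝ) + 1) * (2 * (n:ℝ) + 1) ≠ 0 := by positivity
    have d2 : ((n:ℝ) + 1 + 1) * (2 * ((n:ℝ) + 1) + 1) ≠ 0 := by positivity
    field_simp
    ring
  rw [heq]
  positivity
end
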